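/- arXiv:2207.06129 — 3 statements merged into one kernel-verified Lean document; each statement's English description precedes it below -/
import Mathlib

section
/- Let 1 ≤ p < ∞ and w ∈ A_p. Then there exists a constant C > 0 such that for every a ∈ ℝⁿ, every r > 0, and every f ∈ L^{p,w}_loc: ∫_{ℝⁿ∖B(a,r)} |f(y)|/|a−y|^n dy ≤ C·∫_r^∞ w(B(a,s))^{-1/p} ‖f‖_{L^{p,w}(B(a,s))} ds/s. -/
open MeasureTheory Metric Set
open scoped ENNReal

noncomputable section

/-- The weighted measure of a set: `w(E) = ∫_E w(x) dx`, valued in `ℝ≥0∞`. -/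
def wSet {n : ℕ} (w : EuclideanSpace ℝ (Fin n) → ℝ)
    (E : Set (EuclideanSpace ℝ (Fin n))) : ℝ≥0∞ :=
  ∫⁻ x in E, ENNReal.ofReal (w x)

/-- The weighted Lebesgue norm `‖f‖_{L^{p,w}(Ω)} = (∫_Ω |f(x)|^p w(x) dx)^{1/p}`. -/
def wLp {n : ℕ} (p : ℝ) (w f : EuclideanSpace ℝ (Fin n) → ℝ)
    (Ω : Set (EuclideanSpace ℝ (Fin n))) : ℝ≥0∞ :=
  (∫⁻ x in Ω, ENNReal.ofReal |f x| ^ p * ENNReal.ofReal (w x)) ^ (1 / p)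

/-- The weighted Lebesgue norm for an `ℝ≥0∞`-valued function. -/
def wLpE {n : ℕ} (p : ℝ) (w : EuclideanSpace ℝ (Fin n) → ℝ)
    (g : EuclideanSpace ℝ (Fin n) → ℝ≥0∞) (Ω : Set (EuclideanSpace ℝ (Fin n))) : ℝ≥0∞ :=
  (∫⁻ x in Ω, g x ^ p * ENNReal.ofReal (w x)) ^ (1 / p)

/-- The weak weighted Lebesgue norm `‖f‖_{WL^{p,w}(Ω)} = sup_{γ>0} γ·w({x ∈ Ω : |f(x)| > γ})^{1/p}`. -/
def wWeakLp {n : ℕ} (p : ℝ) (w f : EuclideanSpace ℝ (Fin n) → ℝ)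
    (Ω : Set (EuclideanSpace ℝ (Fin n))) : ℝ≥0∞ :=
  ⨆ γ : Set.Ioi (0 : ℝ),
    ENNReal.ofReal γ.1 * (wSet w {x | x ∈ Ω ∧ γ.1 < |f x|}) ^ (1 / p)

/-- The weak weighted Lebesgue norm for an `ℝ≥0∞`-valued function. -/
def wWeakLpE {n : ℕ} (p : ℝ) (w : EuclideanSpace ℝ (Fin n) → ℝ)
    (g : EuclideanSpace ℝ (Fin n) → ℝ≥0∞) (Ω : Set (EuclideanSpace ℝ (Fin n))) : ℝ≥0∞ :=
  ⨆ γ : Set.Ioi (0 : ℝ),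
    ENNReal.ofReal γ.1 * (wSet w {x | x ∈ Ω ∧ ENNReal.ofReal γ.1 < g x}) ^ (1 / p)

/-- `f ∈ L^{p,w}_loc`: `f` is measurable and `‖f‖_{L^{p,w}(B)} < ∞` on every ball. -/
def MemLocWLp {n : ℕ} (p : ℝ) (w f : EuclideanSpace ℝ (Fin n) → ℝ) : Prop :=
  Measurable f ∧ ∀ (a : EuclideanSpace ℝ (Fin n)) (r : ℝ), 0 < r → wLp p w f (ball a r) < ⊤

/-- A weight: nonnegative, measurable, locally integrable, positive a.e. -/
def IsWeight {n : ℕ} (w : EuclideanSpace ℝ (Fin n) → ℝ) : Prop :=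
  Measurable w ∧ (∀ x, 0 ≤ w x) ∧ LocallyIntegrable w volume ∧ ∀ᵐ x ∂volume, 0 < w x

/-- The Muckenhoupt class `A_p` for `1 < p`. -/
def MuckAp {n : ℕ} (p : ℝ) (w : EuclideanSpace ℝ (Fin n) → ℝ) : Prop :=
  ∃ C : ℝ, 0 < C ∧ ∀ (a : EuclideanSpace ℝ (Fin n)) (r : ℝ), 0 < r →
    ((volume (ball a r))⁻¹ * ∫⁻ x in ball a r, ENNReal.ofReal (w x)) *
      ((volume (ball a r))⁻¹ *
        ∫⁻ x in ball a r, ENNReal.ofReal (w x ^ (-(1 / (p - 1))))) ^ (p - 1) ≤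
      ENNReal.ofReal C

/-- The Muckenhoupt class `A_1`. -/
def MuckA1 {n : ℕ} (w : EuclideanSpace ℝ (Fin n) → ℝ) : Prop :=
  ∃ C : ℝ, 0 < C ∧ ∀ (a : EuclideanSpace ℝ (Fin n)) (r : ℝ), 0 < r →
    ((volume (ball a r))⁻¹ * ∫⁻ x in ball a r, ENNReal.ofReal (w x)) *
      essSup (fun x => ENNReal.ofReal (w x)⁻¹) (volume.restrict (ball a r)) ≤
      ENNReal.ofReal C

/-- The class `A_{p,q}` for `1 < p`, where `p'` is the conjugate exponent of `p`. -/
def MuckApq {n : ℕ} (p q p' : ℝ) (w : EuclideanSpace ℝ (Fin n) → ℝ) : Prop :=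
  ∃ C : ℝ, 0 < C ∧ ∀ (a : EuclideanSpace ℝ (Fin n)) (r : ℝ), 0 < r →
    ((volume (ball a r))⁻¹ * ∫⁻ x in ball a r, ENNReal.ofReal (w x ^ q)) ^ (1 / q) *
      ((volume (ball a r))⁻¹ * ∫⁻ x in ball a r, ENNReal.ofReal (w x ^ (-p'))) ^ (1 / p') ≤
      ENNReal.ofReal C

/-- The class `A_{1,q}`. -/
def MuckA1q {n : ℕ} (q : ℝ) (w : EuclideanSpace ℝ (Fin n) → ℝ) : Prop :=
  ∃ C : ℝ, 0 < C ∧ ∀ (a : EuclideanSpace ℝ (Fin n)) (r : ℝ), 0 < r →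
    ((volume (ball a r))⁻¹ * ∫⁻ x in ball a r, ENNReal.ofReal (w x ^ q)) ^ (1 / q) *
      essSup (fun x => ENNReal.ofReal (w x)⁻¹) (volume.restrict (ball a r)) ≤
      ENNReal.ofReal C

/-- The Hardy–Littlewood maximal operator. -/
def HLMax {n : ℕ} (f : EuclideanSpace ℝ (Fin n) → ℝ)
    (x : EuclideanSpace ℝ (Fin n)) : ℝ≥0∞ :=
  ⨆ r : Set.Ioi (0 : ℝ), (volume (ball x r.1))⁻¹ * ∫⁻ y in ball x r.1, ENNReal.ofReal |f y|

/-- The fractional integral operator `I_α` (applied to `|f|`, valued in `ℝ≥0∞`). -/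
def fracIntE {n : ℕ} (α : ℝ) (f : EuclideanSpace ℝ (Fin n) → ℝ)
    (x : EuclideanSpace ℝ (Fin n)) : ℝ≥0∞ :=
  ∫⁻ y, ENNReal.ofReal |f y| / ENNReal.ofReal (dist x y ^ ((n : ℝ) - α))

/-- The fractional maximal operator `M_α`. -/
def fracMax {n : ℕ} (α : ℝ) (f : EuclideanSpace ℝ (Fin n) → ℝ)
    (x : EuclideanSpace ℝ (Fin n)) : ℝ≥0∞ :=
  ⨆ r : Set.Ioi (0 : ℝ),
    (volume (ball x r.1)) ^ (α / (n : ℝ) - 1) * ∫⁻ y in ball x r.1, ENNReal.ofReal |f y|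

/-- The generalized weighted Morrey norm `‖f‖_{M^{p,w}_ψ}`. -/
def morreyNorm {n : ℕ} (p : ℝ) (w : EuclideanSpace ℝ (Fin n) → ℝ)
    (ψ : EuclideanSpace ℝ (Fin n) → ℝ → ℝ) (f : EuclideanSpace ℝ (Fin n) → ℝ) : ℝ≥0∞ :=
  ⨆ (a : EuclideanSpace ℝ (Fin n)) (r : Set.Ioi (0 : ℝ)),
    (ENNReal.ofReal (ψ a r.1))⁻¹ * wSet w (ball a r.1) ^ (-(1 / p)) * wLp p w f (ball a r.1)

/-- The generalized weighted Morrey norm for an `ℝ≥0∞`-valued function. -/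
def morreyNormE {n : ℕ} (p : ℝ) (w : EuclideanSpace ℝ (Fin n) → ℝ)
    (ψ : EuclideanSpace ℝ (Fin n) → ℝ → ℝ) (g : EuclideanSpace ℝ (Fin n) → ℝ≥0∞) : ℝ≥0∞ :=
  ⨆ (a : EuclideanSpace ℝ (Fin n)) (r : Set.Ioi (0 : ℝ)),
    (ENNReal.ofReal (ψ a r.1))⁻¹ * wSet w (ball a r.1) ^ (-(1 / p)) * wLpE p w g (ball a r.1)

/-- The generalized weighted weak Morrey norm `‖f‖_{WM^{p,w}_ψ}`. -/
def morreyWeakNorm {n : ℕ} (p : ℝ) (w : EuclideanSpace ℝ (Fin n) → ℝ)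
    (ψ : EuclideanSpace ℝ (Fin n) → ℝ → ℝ) (f : EuclideanSpace ℝ (Fin n) → ℝ) : ℝ≥0∞ :=
  ⨆ (a : EuclideanSpace ℝ (Fin n)) (r : Set.Ioi (0 : ℝ)),
    (ENNReal.ofReal (ψ a r.1))⁻¹ * wSet w (ball a r.1) ^ (-(1 / p)) * wWeakLp p w f (ball a r.1)

/-- The generalized weighted weak Morrey norm for an `ℝ≥0∞`-valued function. -/
def morreyWeakNormE {n : ℕ} (p : ℝ) (w : EuclideanSpace ℝ (Fin n) → ℝ)
    (ψ : EuclideanSpace ℝ (Fin n) → ℝ → ℝ) (g : EuclideanSpace ℝ (Fin n) → ℝ≥0∞) : ℝ≥0∞ :=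
  ⨆ (a : EuclideanSpace ℝ (Fin n)) (r : Set.Ioi (0 : ℝ)),
    (ENNReal.ofReal (ψ a r.1))⁻¹ * wSet w (ball a r.1) ^ (-(1 / p)) * wWeakLpE p w g (ball a r.1)

end


lemma lint_Ioi_rpow {a c : ℝ} (ha : a < -1) (hc : 0 < c) :
    ∫⁻ s in Set.Ioi c, ENNReal.ofReal (s ^ a) = ENNReal.ofReal (-c ^ (a + 1) / (a + 1)) := by
  rw [← ofReal_integral_eq_lintegral_ofReal (integrableOn_Ioi_rpow_of_lt ha hc)
      ((ae_restrict_iff' measurableSet_Ioi).2 (Filter.Eventually.of_forall fun s hs =>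
        Real.rpow_nonneg (le_of_lt (hc.trans hs)) a)),
    integral_Ioi_rpow_of_lt ha hc]

lemma wSet_pos {n : ℕ} {w : EuclideanSpace ℝ (Fin n) → ℝ} (hw : IsWeight w)
    (a : EuclideanSpace ℝ (Fin n)) {s : ℝ} (hs : 0 < s) : 0 < wSet w (ball a s) := by
  obtain ⟨hm, hnn, hloc, hpos⟩ := hw
  rw [wSet, lintegral_pos_iff_support (hm.ennreal_ofReal)]
  set μr := volume.restrict (ball a s)
  have h1 : ∀ᵐ x ∂μr, x ∈ Function.support fun x => ENNReal.ofReal (w x) := by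
    filter_upwards [ae_restrict_of_ae hpos] with x hx
    simpa [Function.support] using (ENNReal.ofReal_pos.2 hx).ne'
  have h0 : μr ((Function.support fun x => ENNReal.ofReal (w x))ᶜ) = 0 := by
    simpa [Set.compl_def] using ae_iff.mp h1
  have huniv : 0 < μr Set.univ := by
    rw [Measure.restrict_apply_univ]
    exact measure_ball_pos _ _ hs
  calc 0 < μr Set.univ := huniv
    _ ≤ μr (Function.support fun x => ENNReal.ofReal (w x))
        + μr ((Function.support fun x => ENNReal.ofReal (w x))ᶜ) := by
          rw [← Set.union_compl_self (Function.support fun x => ENNReal.ofReal (w x))] at huniv ⊢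
          exact measure_union_le _ _
    _ = μr (Function.support fun x => ENNReal.ofReal (w x)) := by rw [h0, add_zero]

lemma wSet_lt_top {n : ℕ} {w : EuclideanSpace ℝ (Fin n) → ℝ} (hw : IsWeight w)
    (a : EuclideanSpace ℝ (Fin n)) (s : ℝ) : wSet w (ball a s) < ⊤ := by
  obtain ⟨hm, hnn, hloc, hpos⟩ := hw
  have hint : IntegrableOn w (Metric.closedBall a s) volume :=
    hloc.integrableOn_isCompact (isCompact_closedBall a s)
  have hint' : IntegrableOn w (ball a s) volume := hint.mono_set ball_subset_closedBall
  have := hint'.2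
  rw [wSet]
  refine lt_of_le_of_lt (lintegral_mono fun x => ?_) this
  calc ENNReal.ofReal (w x) ≤ ENNReal.ofReal ‖w x‖ :=
        ENNReal.ofReal_le_ofReal (le_abs_self _)
    _ = ↑‖w x‖₊ := ofReal_norm _

lemma ball_estimate {n : ℕ} {p : ℝ} (hp : 1 ≤ p) {w : EuclideanSpace ℝ (Fin n) → ℝ}
    (hw : IsWeight w)
    (hAp : (1 < p → MuckAp p w) ∧ (p = 1 → MuckA1 w)) :
    ∃ C₂ : ℝ, 0 < C₂ ∧ ∀ (a : EuclideanSpace ℝ (Fin n)) (s : ℝ), 0 < s →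
      ∀ f : EuclideanSpace ℝ (Fin n) → ℝ, Measurable f →
      ∫⁻ y in ball a s, ENNReal.ofReal |f y| ≤
        ENNReal.ofReal C₂ * volume (ball a s) *
          (wSet w (ball a s) ^ (-(1 / p)) * wLp p w f (ball a s)) := by
  obtain ⟨hm, hnn, hloc, hpos⟩ := hw
  rcases eq_or_lt_of_le hp with hp1 | hp1
  · -- p = 1
    obtain ⟨C, hC, hA⟩ := hAp.2 hp1.symm
    refine ⟨C, hC, fun a s hs f hf => ?_⟩
    set B := ball a s
    set V := volume B with hV
    set W := wSet w B with hW
    have hV0 : V ≠ 0 := (measure_ball_pos _ _ hs).ne'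
    have hVt : V ≠ ⊤ := (measure_ball_lt_top).ne
    have hW0 : W ≠ 0 := (wSet_pos ⟨hm, hnn, hloc, hpos⟩ a hs).ne'
    have hWt : W ≠ ⊤ := (wSet_lt_top ⟨hm, hnn, hloc, hpos⟩ a s).ne
    set E := essSup (fun x => ENNReal.ofReal (w x)⁻¹) (volume.restrict B) with hE
    have hEle : E ≤ ENNReal.ofReal C * (V * W⁻¹) := by
      have h := hA a s hs
      have hX0 : V⁻¹ * W ≠ 0 := mul_ne_zero (ENNReal.inv_ne_zero.2 hVt) hW0
      have hXt : V⁻¹ * W ≠ ⊤ := ENNReal.mul_ne_top (ENNReal.inv_ne_top.2 hV0) hWt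
      have : E ≤ ENNReal.ofReal C / (V⁻¹ * W) := by
        rw [ENNReal.le_div_iff_mul_le (Or.inl hX0) (Or.inl hXt), mul_comm]
        exact h
      refine this.trans (le_of_eq ?_)
      rw [ENNReal.div_eq_inv_mul,
        ENNReal.mul_inv (Or.inl (ENNReal.inv_ne_zero.2 hVt)) (Or.inl (ENNReal.inv_ne_top.2 hV0)),
        inv_inv, mul_comm]
    have step1 : ∫⁻ y in B, ENNReal.ofReal |f y| ≤
        (∫⁻ y in B, ENNReal.ofReal |f y| * ENNReal.ofReal (w y)) * E := by
      rw [← lintegral_mul_const _ (f := fun y => ENNReal.ofReal |f y| * ENNReal.ofReal (w y)) ((hf.abs.ennreal_ofReal).mul (hm.ennreal_ofReal))]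
      refine lintegral_mono_ae ?_
      filter_upwards [ae_restrict_of_ae hpos,
        ae_le_essSup (μ := volume.restrict B) (f := fun x => ENNReal.ofReal (w x)⁻¹)] with x hx hx2
      calc ENNReal.ofReal |f x| = ENNReal.ofReal |f x| *
            (ENNReal.ofReal (w x) * ENNReal.ofReal (w x)⁻¹) := by
            rw [← ENNReal.ofReal_mul (hnn x), mul_inv_cancel₀ hx.ne', ENNReal.ofReal_one, mul_one]
        _ ≤ ENNReal.ofReal |f x| * ENNReal.ofReal (w x) * E := by
            rw [mul_assoc]
            exact mul_le_mul_right (mul_le_mul_right hx2 _) _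
    have hwLp : wLp p w f B = ∫⁻ y in B, ENNReal.ofReal |f y| * ENNReal.ofReal (w y) := by
      simp [wLp, ← hp1, ENNReal.rpow_one]
    have hWp : W ^ (-(1 / p)) = W⁻¹ := by
      have : -(1 / p) = (-1 : ℝ) := by rw [← hp1]; norm_num
      rw [this, ENNReal.rpow_neg_one]
    calc ∫⁻ y in B, ENNReal.ofReal |f y|
        ≤ (∫⁻ y in B, ENNReal.ofReal |f y| * ENNReal.ofReal (w y)) * E := step1
      _ ≤ (∫⁻ y in B, ENNReal.ofReal |f y| * ENNReal.ofReal (w y)) *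
            (ENNReal.ofReal C * (V * W⁻¹)) := mul_le_mul_right hEle _
      _ = ENNReal.ofReal C * V * (W ^ (-(1 / p)) * wLp p w f B) := by
          rw [hWp, hwLp]; ring
  · -- p > 1
    obtain ⟨C, hC, hA⟩ := hAp.1 hp1
    refine ⟨max C 1, lt_of_lt_of_le zero_lt_one (le_max_right _ _), fun a s hs f hf => ?_⟩
    set B := ball a s
    set μr := volume.restrict B with hμr
    set V := volume B with hV
    set W := wSet w B with hW
    have hV0 : V ≠ 0 := (measure_ball_pos _ _ hs).ne'
    have hVt : V ≠ ⊤ := (measure_ball_lt_top).ne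
    have hW0 : W ≠ 0 := (wSet_pos ⟨hm, hnn, hloc, hpos⟩ a hs).ne'
    have hWt : W ≠ ⊤ := (wSet_lt_top ⟨hm, hnn, hloc, hpos⟩ a s).ne
    have hp0 : p ≠ 0 := by positivity
    set q := p / (p - 1) with hq
    have hpq : p.HolderConjugate q := Real.HolderConjugate.conjExponent hp1
    set F := fun x => ENNReal.ofReal |f x| * ENNReal.ofReal (w x) ^ (1 / p) with hF
    set G := fun x => ENNReal.ofReal (w x) ^ (-(1 / p)) with hG
    set S := ∫⁻ x in B, ENNReal.ofReal (w x ^ (-(1 / (p - 1)))) with hS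
    have hFm : Measurable F := (hf.abs.ennreal_ofReal).mul ((hm.ennreal_ofReal).pow_const _)
    have hGm : Measurable G := (hm.ennreal_ofReal).pow_const _
    -- Hölder
    have holder : ∫⁻ y in B, ENNReal.ofReal |f y| ≤
        (∫⁻ x, F x ^ p ∂μr) ^ (1 / p) * (∫⁻ x, G x ^ q ∂μr) ^ (1 / q) := by
      have he : ∫⁻ y in B, ENNReal.ofReal |f y| = ∫⁻ x, (F * G) x ∂μr := by
        refine lintegral_congr_ae ?_
        filter_upwards [ae_restrict_of_ae hpos] with x hx
        have h0 : ENNReal.ofReal (w x) ≠ 0 := (ENNReal.ofReal_pos.2 hx).ne'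
        simp only [Pi.mul_apply, hF, hG, mul_assoc]
        rw [← ENNReal.rpow_add _ _ h0 ENNReal.ofReal_ne_top]
        norm_num
      rw [he]
      exact ENNReal.lintegral_mul_le_Lp_mul_Lq μr hpq hFm.aemeasurable hGm.aemeasurable
    have hFp : (∫⁻ x, F x ^ p ∂μr) ^ (1 / p) = wLp p w f B := by
      rw [wLp]
      congr 1
      refine lintegral_congr fun x => ?_
      rw [hF, ENNReal.mul_rpow_of_nonneg _ _ (by positivity), ← ENNReal.rpow_mul,
        one_div_mul_cancel hp0, ENNReal.rpow_one]
    have hGq : ∫⁻ x, G x ^ q ∂μr = S := by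
      refine lintegral_congr_ae ?_
      filter_upwards [ae_restrict_of_ae hpos] with x hx
      rw [hG, ← ENNReal.rpow_mul, ENNReal.ofReal_rpow_of_pos hx]
      congr 1
      rw [hq]
      field_simp
    -- use A_p
    have key : S ^ (1 / q) ≤ ENNReal.ofReal (max C 1) * V * W ^ (-(1 / p)) := by
      set T := V⁻¹ * S with hT
      have hST : S = V * T := by
        rw [hT, ← mul_assoc, ENNReal.mul_inv_cancel hV0 hVt, one_mul]
      have hTle : T ^ (p - 1) ≤ ENNReal.ofReal C * (V * W⁻¹) := by
        have h := hA a s hs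
        have hX0 : V⁻¹ * W ≠ 0 := mul_ne_zero (ENNReal.inv_ne_zero.2 hVt) hW0
        have hXt : V⁻¹ * W ≠ ⊤ := ENNReal.mul_ne_top (ENNReal.inv_ne_top.2 hV0) hWt
        have : T ^ (p - 1) ≤ ENNReal.ofReal C / (V⁻¹ * W) := by
          rw [ENNReal.le_div_iff_mul_le (Or.inl hX0) (Or.inl hXt), mul_comm]
          exact h
        refine this.trans (le_of_eq ?_)
        rw [ENNReal.div_eq_inv_mul,
          ENNReal.mul_inv (Or.inl (ENNReal.inv_ne_zero.2 hVt)) (Or.inl (ENNReal.inv_ne_top.2 hV0)),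
          inv_inv, mul_comm]
      have h1q : 1 / q = (p - 1) * (1 / p) := by
        rw [hq]; field_simp
      calc S ^ (1 / q) = V ^ (1 / q) * T ^ (1 / q) := by
            rw [hST, ENNReal.mul_rpow_of_nonneg _ _ hpq.symm.one_div_nonneg]
        _ = V ^ (1 / q) * (T ^ (p - 1)) ^ (1 / p) := by
            rw [← ENNReal.rpow_mul, ← h1q]
        _ ≤ V ^ (1 / q) * (ENNReal.ofReal C * (V * W⁻¹)) ^ (1 / p) := by
            exact mul_le_mul_right (ENNReal.rpow_le_rpow hTle (by positivity)) _
        _ = V ^ (1 / q) * (ENNReal.ofReal C ^ (1 / p) * (V ^ (1 / p) * (W⁻¹) ^ (1 / p))) := by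
            rw [ENNReal.mul_rpow_of_nonneg _ _ (by positivity),
              ENNReal.mul_rpow_of_nonneg _ _ (by positivity)]
        _ = ENNReal.ofReal C ^ (1 / p) * (V ^ (1 / q) * V ^ (1 / p)) * W ^ (-(1 / p)) := by
            rw [ENNReal.inv_rpow, ← ENNReal.rpow_neg]; ring
        _ = ENNReal.ofReal C ^ (1 / p) * V * W ^ (-(1 / p)) := by
            have hsum : 1 / q + 1 / p = 1 := by
              rw [one_div, one_div, add_comm]; exact hpq.inv_add_inv_eq_one
            rw [← ENNReal.rpow_add _ _ hV0 hVt, hsum, ENNReal.rpow_one]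
        _ ≤ ENNReal.ofReal (max C 1) * V * W ^ (-(1 / p)) := by
            refine mul_le_mul_left (mul_le_mul_left ?_ _) _
            rw [ENNReal.ofReal_rpow_of_pos hC]
            refine ENNReal.ofReal_le_ofReal ?_
            rcases le_or_gt C 1 with h | h
            · exact le_trans (Real.rpow_le_one hC.le h (by positivity)) (le_max_right _ _)
            · refine le_trans ?_ (le_max_left _ _)
              calc C ^ (1 / p) ≤ C ^ (1 : ℝ) :=
                    Real.rpow_le_rpow_of_exponent_le h.le (by
                      rw [div_le_one (by positivity)]; linarith)
                _ = C := Real.rpow_one C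
    calc ∫⁻ y in B, ENNReal.ofReal |f y|
        ≤ (∫⁻ x, F x ^ p ∂μr) ^ (1 / p) * (∫⁻ x, G x ^ q ∂μr) ^ (1 / q) := holder
      _ = wLp p w f B * S ^ (1 / q) := by rw [hFp, hGq]
      _ ≤ wLp p w f B * (ENNReal.ofReal (max C 1) * V * W ^ (-(1 / p))) :=
          mul_le_mul_right key _
      _ = ENNReal.ofReal (max C 1) * V * (W ^ (-(1 / p)) * wLp p w f B) := by ring

/-- Let `1 ≤ p < ∞` and `w ∈ A_p`. Then there is `C > 0` such that for every
`a ∈ ℝⁿ`, `r > 0` and `f ∈ L^{p,w}_loc`: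
`∫_{ℝⁿ∖B(a,r)} |f(y)|/|a−y|^n dy ≤ C·∫_r^∞ w(B(a,s))^{-1/p} ‖f‖_{L^{p,w}(B(a,s))} ds/s`. -/
theorem statement3 {n : ℕ} (p : ℝ) (hp : 1 ≤ p)
    (w : EuclideanSpace ℝ (Fin n) → ℝ) (hw : IsWeight w)
    (hAp : (1 < p → MuckAp p w) ∧ (p = 1 → MuckA1 w)) :
    ∃ C : ℝ, 0 < C ∧
      ∀ (a : EuclideanSpace ℝ (Fin n)) (r : ℝ) (f : EuclideanSpace ℝ (Fin n) → ℝ),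
        0 < r → MemLocWLp p w f →
        (∫⁻ y in (ball a r)ᶜ, ENNReal.ofReal |f y| / ENNReal.ofReal (dist a y ^ n)) ≤
          ENNReal.ofReal C *
            ∫⁻ s in Set.Ioi r,
              wSet w (ball a s) ^ (-(1 / p)) * wLp p w f (ball a s) *
                ENNReal.ofReal s⁻¹ := by
  rcases Nat.eq_zero_or_pos n with hn | hn
  · subst hn
    refine ⟨1, zero_lt_one, fun a r f hr hf => ?_⟩
    have hempty : (ball a r)ᶜ = (∅ : Set (EuclideanSpace ℝ (Fin 0))) := by
      ext y
      simp [Subsingleton.elim y a, hr]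
    rw [hempty]
    simp
  · obtain ⟨C₂, hC₂, hball⟩ := ball_estimate hp hw hAp
    set v := volume (ball (0 : EuclideanSpace ℝ (Fin n)) 1) with hv
    have hv0 : v ≠ 0 := (measure_ball_pos _ _ zero_lt_one).ne'
    have hvt : v ≠ ⊤ := measure_ball_lt_top.ne
    have hvR : 0 < v.toReal := ENNReal.toReal_pos hv0 hvt
    have hn1 : (1 : ℝ) ≤ (n : ℝ) := by exact_mod_cast hn
    refine ⟨n * C₂ * v.toReal, by positivity, fun a r f hr hf => ?_⟩
    obtain ⟨hfm, _⟩ := hf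
    set g : EuclideanSpace ℝ (Fin n) → ℝ → ℝ≥0∞ := fun y s =>
      ENNReal.ofReal |f y| *
        (if dist a y < s then ENNReal.ofReal (s ^ (-(n : ℝ) - 1)) else 0) with hg
    have hga : -(n : ℝ) - 1 < -1 := by linarith
    -- pointwise identity on the complement
    have hpt : ∀ y ∈ (ball a r)ᶜ,
        ENNReal.ofReal |f y| / ENNReal.ofReal (dist a y ^ n) =
        ENNReal.ofReal (n : ℝ) * ∫⁻ s in Set.Ioi r, g y s := by
      intro y hy
      have hd : r ≤ dist a y := by
        rw [dist_comm]
        exact le_of_not_gt (by simpa [mem_ball] using hy)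
      have hd0 : 0 < dist a y := lt_of_lt_of_le hr hd
      have hC : ∫⁻ s in Set.Ioi r,
          (if dist a y < s then ENNReal.ofReal (s ^ (-(n : ℝ) - 1)) else 0) =
          ∫⁻ s in Set.Ioi (dist a y), ENNReal.ofReal (s ^ (-(n : ℝ) - 1)) := by
        have : ∀ s : ℝ, (if dist a y < s then ENNReal.ofReal (s ^ (-(n : ℝ) - 1)) else 0) =
            (Set.Ioi (dist a y)).indicator (fun s => ENNReal.ofReal (s ^ (-(n : ℝ) - 1))) s := by
          intro s; rw [Set.indicator_apply]; simp [Set.mem_Ioi]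
        simp_rw [this]
        rw [lintegral_indicator measurableSet_Ioi, Measure.restrict_restrict measurableSet_Ioi,
          Set.inter_eq_left.2 (Set.Ioi_subset_Ioi hd)]
      calc ENNReal.ofReal |f y| / ENNReal.ofReal (dist a y ^ n)
          = ENNReal.ofReal |f y| * ENNReal.ofReal (dist a y ^ (-(n : ℝ))) := by
            rw [div_eq_mul_inv, ← ENNReal.ofReal_inv_of_pos (by positivity),
              ← Real.rpow_natCast (dist a y) n, ← Real.rpow_neg hd0.le]
        _ = ENNReal.ofReal (n : ℝ) * ∫⁻ s in Set.Ioi r, g y s := by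
            simp_rw [hg]
            rw [lintegral_const_mul' _ _ ENNReal.ofReal_ne_top, hC,
              lint_Ioi_rpow hga hd0]
            have he : -(n : ℝ) - 1 + 1 = -(n : ℝ) := by ring
            rw [he]
            rw [← mul_assoc, mul_comm (ENNReal.ofReal (n:ℝ)), mul_assoc]
            congr 1
            rw [← ENNReal.ofReal_mul (by positivity)]
            congr 1
            have hne : (n : ℝ) ≠ 0 := by positivity
            field_simp
    have hswap :
        ∫⁻ y in (ball a r)ᶜ, ∫⁻ s in Set.Ioi r, g y s =
        ∫⁻ s in Set.Ioi r, ∫⁻ y in (ball a r)ᶜ, g y s := by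
      apply lintegral_lintegral_swap
      apply Measurable.aemeasurable
      have h1 : Measurable fun p : EuclideanSpace ℝ (Fin n) × ℝ => ENNReal.ofReal |f p.1| :=
        (hfm.abs.ennreal_ofReal).comp measurable_fst
      have hs : MeasurableSet {p : EuclideanSpace ℝ (Fin n) × ℝ | dist a p.1 < p.2} :=
        measurableSet_lt ((continuous_const.dist continuous_fst).measurable) measurable_snd
      exact h1.mul (Measurable.ite hs ((measurable_snd.pow_const _).ennreal_ofReal)
        measurable_const)
    -- bound the inner integral for each s > r
    have hinner : ∀ s : ℝ, r < s →
        ∫⁻ y in (ball a r)ᶜ, g y s ≤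
          (ENNReal.ofReal C₂ * v) *
            (wSet w (ball a s) ^ (-(1 / p)) * wLp p w f (ball a s) * ENNReal.ofReal s⁻¹) := by
      intro s hs
      have hs0 : 0 < s := hr.trans hs
      have step1 : ∫⁻ y in (ball a r)ᶜ, g y s ≤
          ENNReal.ofReal (s ^ (-(n : ℝ) - 1)) * ∫⁻ y in ball a s, ENNReal.ofReal |f y| := by
        calc ∫⁻ y in (ball a r)ᶜ, g y s ≤ ∫⁻ y, g y s := setLIntegral_le_lintegral _ _
          _ ≤ ∫⁻ y, (ball a s).indicator
                (fun y => ENNReal.ofReal (s ^ (-(n : ℝ) - 1)) * ENNReal.ofReal |f y|) y := by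
              refine lintegral_mono fun y => ?_
              simp only [hg]
              by_cases hys : dist a y < s
              · have hmem : y ∈ ball a s := by rwa [mem_ball, dist_comm]
                rw [Set.indicator_of_mem hmem, if_pos hys, mul_comm]
              · rw [if_neg hys, mul_zero]
                exact zero_le
          _ = ∫⁻ y in ball a s,
                ENNReal.ofReal (s ^ (-(n : ℝ) - 1)) * ENNReal.ofReal |f y| :=
              lintegral_indicator measurableSet_ball _
          _ = ENNReal.ofReal (s ^ (-(n : ℝ) - 1)) * ∫⁻ y in ball a s, ENNReal.ofReal |f y| :=
              lintegral_const_mul' _ _ ENNReal.ofReal_ne_top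
      have hvol : volume (ball a s) = ENNReal.ofReal (s ^ n) * v := by
        rw [hv, Measure.addHaar_ball_of_pos volume a hs0, finrank_euclideanSpace_fin]
      have hss : ENNReal.ofReal (s ^ (-(n : ℝ) - 1)) * ENNReal.ofReal (s ^ n) =
          ENNReal.ofReal s⁻¹ := by
        rw [← ENNReal.ofReal_mul (by positivity)]
        congr 1
        rw [← Real.rpow_natCast s n, ← Real.rpow_add hs0]
        have he2 : -(n : ℝ) - 1 + n = -1 := by ring
        rw [he2, Real.rpow_neg_one]
      calc ∫⁻ y in (ball a r)ᶜ, g y s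
          ≤ ENNReal.ofReal (s ^ (-(n : ℝ) - 1)) * ∫⁻ y in ball a s, ENNReal.ofReal |f y| := step1
        _ ≤ ENNReal.ofReal (s ^ (-(n : ℝ) - 1)) *
              (ENNReal.ofReal C₂ * volume (ball a s) *
                (wSet w (ball a s) ^ (-(1 / p)) * wLp p w f (ball a s))) :=
            mul_le_mul_right (hball a s hs0 f hfm) _
        _ = (ENNReal.ofReal C₂ * v) *
              (wSet w (ball a s) ^ (-(1 / p)) * wLp p w f (ball a s) * ENNReal.ofReal s⁻¹) := by
            rw [hvol, ← hss]; ring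
    -- put everything together
    calc ∫⁻ y in (ball a r)ᶜ, ENNReal.ofReal |f y| / ENNReal.ofReal (dist a y ^ n)
        = ∫⁻ y in (ball a r)ᶜ, ENNReal.ofReal (n : ℝ) * ∫⁻ s in Set.Ioi r, g y s :=
          setLIntegral_congr_fun measurableSet_ball.compl hpt
      _ = ENNReal.ofReal (n : ℝ) * ∫⁻ y in (ball a r)ᶜ, ∫⁻ s in Set.Ioi r, g y s :=
          lintegral_const_mul' _ _ ENNReal.ofReal_ne_top
      _ = ENNReal.ofReal (n : ℝ) * ∫⁻ s in Set.Ioi r, ∫⁻ y in (ball a r)ᶜ, g y s := by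
          rw [hswap]
      _ ≤ ENNReal.ofReal (n : ℝ) * ∫⁻ s in Set.Ioi r,
            (ENNReal.ofReal C₂ * v) *
              (wSet w (ball a s) ^ (-(1 / p)) * wLp p w f (ball a s) * ENNReal.ofReal s⁻¹) := by
          refine mul_le_mul_right (lintegral_mono_ae ?_) _
          filter_upwards [ae_restrict_mem measurableSet_Ioi] with s hs
          exact hinner s hs
      _ = ENNReal.ofReal (↑n * C₂ * v.toReal) *
            ∫⁻ s in Set.Ioi r,
              wSet w (ball a s) ^ (-(1 / p)) * wLp p w f (ball a s) * ENNReal.ofReal s⁻¹ := by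
          rw [lintegral_const_mul' _ _ (ENNReal.mul_ne_top ENNReal.ofReal_ne_top hvt),
            ← mul_assoc]
          congr 1
          rw [ENNReal.ofReal_mul (by positivity), ENNReal.ofReal_mul (by positivity),
            ENNReal.ofReal_toReal hvt, mul_assoc]
end

section
/- Let w ∈ A_1 and let M be the Hardy–Littlewood maximal operator. Then there exists a constant C > 0, independent of f, a, and r, such that for every a ∈ ℝⁿ, r > 0, and f ∈ L^{1,w}_loc: ‖Mf‖_{WL^{1,w}(B(a,r))} ≤ C·w(B(a,r))·sup_{r<t<∞} w(B(a,t))^{-1} ‖f‖_{L^{1,w}(B(a,t))}. -/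
open MeasureTheory Metric Set
open scoped ENNReal

section aux
open MeasureTheory Metric Set
open scoped ENNReal

variable {n : ℕ}

private lemma aux_wSet_ne_zero {w : EuclideanSpace ℝ (Fin n) → ℝ} (hw : IsWeight w)
    (c : EuclideanSpace ℝ (Fin n)) {s : ℝ} (hs : 0 < s) : wSet w (ball c s) ≠ 0 := by
  intro h0
  rw [wSet, lintegral_eq_zero_iff hw.1.ennreal_ofReal] at h0
  have hpos : ∀ᵐ x ∂(volume.restrict (ball c s)), 0 < w x := ae_restrict_of_ae hw.2.2.2
  have hF : ∀ᵐ x ∂(volume.restrict (ball c s)), False := by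
    filter_upwards [h0, hpos] with x hx hx'
    simp only [Pi.zero_apply, ENNReal.ofReal_eq_zero] at hx
    linarith
  rw [ae_iff] at hF
  simp only [not_false_iff, Set.setOf_true, Measure.restrict_apply_univ] at hF
  exact (measure_ball_pos volume c hs).ne' hF

private lemma aux_wSet_ne_top {w : EuclideanSpace ℝ (Fin n) → ℝ} (hw : IsWeight w)
    (c : EuclideanSpace ℝ (Fin n)) (s : ℝ) : wSet w (ball c s) ≠ ⊤ := by
  have h1 : IntegrableOn w (closedBall c s) volume :=
    hw.2.2.1.integrableOn_isCompact (isCompact_closedBall c s)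
  exact ne_top_of_le_ne_top h1.setLIntegral_lt_top.ne
    (lintegral_mono_set ball_subset_closedBall)
private lemma aux_stepa {w : EuclideanSpace ℝ (Fin n) → ℝ} {C₀ : ℝ}
    (hA1 : ∀ (a : EuclideanSpace ℝ (Fin n)) (r : ℝ), 0 < r →
      ((volume (ball a r))⁻¹ * ∫⁻ x in ball a r, ENNReal.ofReal (w x)) *
        essSup (fun x => ENNReal.ofReal (w x)⁻¹) (volume.restrict (ball a r)) ≤
        ENNReal.ofReal C₀)
    (c : EuclideanSpace ℝ (Fin n)) {s : ℝ} (hs : 0 < s) :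
    wSet w (ball c s) * essSup (fun x => ENNReal.ofReal (w x)⁻¹) (volume.restrict (ball c s)) ≤
      ENNReal.ofReal C₀ * volume (ball c s) := by
  set V := volume (ball c s) with hV
  have hV0 : V ≠ 0 := (measure_ball_pos volume c hs).ne'
  have hVt : V ≠ ⊤ := measure_ball_lt_top.ne
  calc wSet w (ball c s) * essSup (fun x => ENNReal.ofReal (w x)⁻¹) (volume.restrict (ball c s))
      = V * (((V)⁻¹ * wSet w (ball c s)) *
        essSup (fun x => ENNReal.ofReal (w x)⁻¹) (volume.restrict (ball c s))) := by
        rw [← mul_assoc, ← mul_assoc, ENNReal.mul_inv_cancel hV0 hVt, one_mul]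
    _ ≤ V * ENNReal.ofReal C₀ := mul_le_mul_right (hA1 c s hs) V
    _ = ENNReal.ofReal C₀ * V := mul_comm _ _

private lemma aux_stepb {w : EuclideanSpace ℝ (Fin n) → ℝ} (hw : IsWeight w)
    (c : EuclideanSpace ℝ (Fin n)) {s : ℝ} (hs : 0 < s) :
    volume (ball c s) ≤
      essSup (fun x => ENNReal.ofReal (w x)⁻¹) (volume.restrict (ball c s)) * wSet w (ball c s) := by
  set σ := essSup (fun x => ENNReal.ofReal (w x)⁻¹) (volume.restrict (ball c s)) with hσ
  have hae1 : ∀ᵐ x ∂(volume.restrict (ball c s)), (1 : ℝ≥0∞) ≤ σ * ENNReal.ofReal (w x) := by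
    filter_upwards [ae_restrict_of_ae hw.2.2.2,
      ae_le_essSup (μ := volume.restrict (ball c s)) (f := fun x => ENNReal.ofReal (w x)⁻¹)]
      with x hx hxσ
    have h1 : (ENNReal.ofReal (w x))⁻¹ ≤ σ := by
      rw [← ENNReal.ofReal_inv_of_pos hx]; exact hxσ
    calc (1 : ℝ≥0∞) = (ENNReal.ofReal (w x))⁻¹ * ENNReal.ofReal (w x) :=
          (ENNReal.inv_mul_cancel (fun h => hx.not_ge (ENNReal.ofReal_eq_zero.1 h))
            ENNReal.ofReal_ne_top).symm
      _ ≤ σ * ENNReal.ofReal (w x) := mul_le_mul_left h1 _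
  have h2 := lintegral_mono_ae hae1
  rw [setLIntegral_one, lintegral_const_mul σ hw.1.ennreal_ofReal] at h2
  exact h2

private lemma aux_master {w : EuclideanSpace ℝ (Fin n) → ℝ} (hw : IsWeight w) {C₀ : ℝ}
    (hA1 : ∀ (a : EuclideanSpace ℝ (Fin n)) (r : ℝ), 0 < r →
      ((volume (ball a r))⁻¹ * ∫⁻ x in ball a r, ENNReal.ofReal (w x)) *
        essSup (fun x => ENNReal.ofReal (w x)⁻¹) (volume.restrict (ball a r)) ≤
        ENNReal.ofReal C₀)
    {c c' : EuclideanSpace ℝ (Fin n)} {s s' : ℝ} (hs : 0 < s) (hs' : 0 < s')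
    (hsub : ball c s ⊆ ball c' s') :
    wSet w (ball c' s') * volume (ball c s) ≤
      ENNReal.ofReal C₀ * volume (ball c' s') * wSet w (ball c s) := by
  have hmono : essSup (fun x => ENNReal.ofReal (w x)⁻¹) (volume.restrict (ball c s)) ≤
      essSup (fun x => ENNReal.ofReal (w x)⁻¹) (volume.restrict (ball c' s')) :=
    essSup_mono_measure (Measure.absolutelyContinuous_of_le (Measure.restrict_mono hsub le_rfl))
  calc wSet w (ball c' s') * volume (ball c s)
      ≤ wSet w (ball c' s') *
        (essSup (fun x => ENNReal.ofReal (w x)⁻¹) (volume.restrict (ball c s)) *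
          wSet w (ball c s)) := mul_le_mul_right (aux_stepb hw c hs) _
    _ ≤ wSet w (ball c' s') *
        (essSup (fun x => ENNReal.ofReal (w x)⁻¹) (volume.restrict (ball c' s')) *
          wSet w (ball c s)) := by gcongr
    _ = (wSet w (ball c' s') *
          essSup (fun x => ENNReal.ofReal (w x)⁻¹) (volume.restrict (ball c' s'))) *
          wSet w (ball c s) := by ring
    _ ≤ ENNReal.ofReal C₀ * volume (ball c' s') * wSet w (ball c s) :=
        mul_le_mul_left (aux_stepa hA1 c' hs') _

private lemma aux_keyf {w : EuclideanSpace ℝ (Fin n) → ℝ} (hw : IsWeight w) {C₀ : ℝ}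
    (hA1 : ∀ (a : EuclideanSpace ℝ (Fin n)) (r : ℝ), 0 < r →
      ((volume (ball a r))⁻¹ * ∫⁻ x in ball a r, ENNReal.ofReal (w x)) *
        essSup (fun x => ENNReal.ofReal (w x)⁻¹) (volume.restrict (ball a r)) ≤
        ENNReal.ofReal C₀)
    {f : EuclideanSpace ℝ (Fin n) → ℝ} (hfm : Measurable f)
    (c : EuclideanSpace ℝ (Fin n)) {s : ℝ} (hs : 0 < s) :
    (∫⁻ x in ball c s, ENNReal.ofReal |f x|) * wSet w (ball c s) ≤
      ENNReal.ofReal C₀ * volume (ball c s) *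
        ∫⁻ x in ball c s, ENNReal.ofReal |f x| * ENNReal.ofReal (w x) := by
  set σ := essSup (fun x => ENNReal.ofReal (w x)⁻¹) (volume.restrict (ball c s)) with hσ
  have hae1 : ∀ᵐ x ∂(volume.restrict (ball c s)),
      ENNReal.ofReal |f x| ≤ σ * (ENNReal.ofReal |f x| * ENNReal.ofReal (w x)) := by
    filter_upwards [ae_restrict_of_ae hw.2.2.2,
      ae_le_essSup (μ := volume.restrict (ball c s)) (f := fun x => ENNReal.ofReal (w x)⁻¹)]
      with x hx hxσ
    have h1 : (ENNReal.ofReal (w x))⁻¹ ≤ σ := by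
      rw [← ENNReal.ofReal_inv_of_pos hx]; exact hxσ
    have h0 : (1 : ℝ≥0∞) ≤ σ * ENNReal.ofReal (w x) :=
      calc (1 : ℝ≥0∞) = (ENNReal.ofReal (w x))⁻¹ * ENNReal.ofReal (w x) :=
            (ENNReal.inv_mul_cancel (fun h => hx.not_ge (ENNReal.ofReal_eq_zero.1 h))
              ENNReal.ofReal_ne_top).symm
        _ ≤ σ * ENNReal.ofReal (w x) := mul_le_mul_left h1 _
    calc ENNReal.ofReal |f x| = ENNReal.ofReal |f x| * 1 := (mul_one _).symm
      _ ≤ ENNReal.ofReal |f x| * (σ * ENNReal.ofReal (w x)) := mul_le_mul_right h0 _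
      _ = σ * (ENNReal.ofReal |f x| * ENNReal.ofReal (w x)) := by ring
  have h2 := lintegral_mono_ae hae1
  rw [lintegral_const_mul σ (f := fun x => ENNReal.ofReal |f x| * ENNReal.ofReal (w x)) ((hfm.abs.ennreal_ofReal).mul hw.1.ennreal_ofReal)] at h2
  calc (∫⁻ x in ball c s, ENNReal.ofReal |f x|) * wSet w (ball c s)
      ≤ (σ * ∫⁻ x in ball c s, ENNReal.ofReal |f x| * ENNReal.ofReal (w x)) *
          wSet w (ball c s) := mul_le_mul_left h2 _
    _ = (wSet w (ball c s) * σ) *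
          ∫⁻ x in ball c s, ENNReal.ofReal |f x| * ENNReal.ofReal (w x) := by ring
    _ ≤ ENNReal.ofReal C₀ * volume (ball c s) *
          ∫⁻ x in ball c s, ENNReal.ofReal |f x| * ENNReal.ofReal (w x) :=
        mul_le_mul_left (aux_stepa hA1 c hs) _

end aux

open MeasureTheory Metric Set in
open scoped ENNReal in
set_option maxHeartbeats 1000000 in
/-- Let `w ∈ A_1`. Then there is `C > 0`, independent of `f`, `a`, `r`,
such that for every `a ∈ ℝⁿ`, `r > 0` and `f ∈ L^{1,w}_loc`:
`‖Mf‖_{WL^{1,w}(B(a,r))} ≤ C·w(B(a,r))·sup_{r<t<∞} w(B(a,t))⁻¹‖f‖_{L^{1,w}(B(a,t))}`. -/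
theorem statement5 {n : ℕ}
    (w : EuclideanSpace ℝ (Fin n) → ℝ) (hw : IsWeight w) (hA1 : MuckA1 w) :
    ∃ C : ℝ, 0 < C ∧
      ∀ (a : EuclideanSpace ℝ (Fin n)) (r : ℝ) (f : EuclideanSpace ℝ (Fin n) → ℝ),
        0 < r → MemLocWLp 1 w f →
        wWeakLpE 1 w (HLMax f) (ball a r) ≤
          ENNReal.ofReal C * wSet w (ball a r) *
            ⨆ t : Set.Ioi r, (wSet w (ball a t.1))⁻¹ * wLp 1 w f (ball a t.1) := by
  classical
  obtain ⟨C₀, hC₀, hA1⟩ := hA1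
  refine ⟨(C₀ + 1) ^ 3 * 16 ^ n, by positivity, ?_⟩
  intro a r f hr hf
  obtain ⟨hfm, -⟩ := hf
  set S := ⨆ t : Set.Ioi r, (wSet w (ball a t.1))⁻¹ * wLp 1 w f (ball a t.1) with hSdef
  set C : ℝ≥0∞ := ENNReal.ofReal ((C₀ + 1) ^ 3 * 16 ^ n) with hCdef
  set D : ℝ≥0∞ := ENNReal.ofReal C₀ with hDdef
  have hWne : ∀ (c : EuclideanSpace ℝ (Fin n)) {s : ℝ}, 0 < s → wSet w (ball c s) ≠ 0 :=
    fun c _ hs => aux_wSet_ne_zero hw c hs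
  have hWnt := aux_wSet_ne_top hw
  have hV0 : ∀ (c : EuclideanSpace ℝ (Fin n)) {s : ℝ}, 0 < s → volume (ball c s) ≠ 0 :=
    fun c _ hs => (measure_ball_pos volume c hs).ne'
  have hVt : ∀ (c : EuclideanSpace ℝ (Fin n)) (s : ℝ), volume (ball c s) ≠ ⊤ :=
    fun c s => measure_ball_lt_top.ne
  have hscale : ∀ (c : EuclideanSpace ℝ (Fin n)) {s : ℝ} (k : ℝ), 0 < s → 0 < k →
      volume (ball c (k * s)) = ENNReal.ofReal (k ^ n) * volume (ball c s) := by
    intro c s k hs hk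
    rw [Measure.addHaar_ball_mul_of_pos volume c hk s, Measure.addHaar_ball_center volume c s,
      finrank_euclideanSpace_fin]
  have hdoublek : ∀ (c : EuclideanSpace ℝ (Fin n)) {s : ℝ} (k : ℝ), 0 < s → 1 ≤ k →
      wSet w (ball c (k * s)) ≤ D * ENNReal.ofReal (k ^ n) * wSet w (ball c s) := by
    intro c s k hs hk
    have hm := aux_master (c := c) (c' := c) hw hA1 hs (by nlinarith : 0 < k * s)
      (ball_subset_ball (by nlinarith : s ≤ k * s))
    rw [hscale c k hs (by linarith)] at hm
    have hm2 : wSet w (ball c (k * s)) * volume (ball c s) ≤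
        (D * ENNReal.ofReal (k ^ n) * wSet w (ball c s)) * volume (ball c s) :=
      le_trans hm (le_of_eq (by ring))
    exact (ENNReal.mul_le_mul_iff_left (hV0 c hs) (hVt c s)).1 hm2
  have hI : ∀ {t : ℝ}, r < t →
      (∫⁻ x in ball a t, ENNReal.ofReal |f x| * ENNReal.ofReal (w x)) ≤
        wSet w (ball a t) * S := by
    intro t ht
    have h1 : (wSet w (ball a t))⁻¹ * wLp 1 w f (ball a t) ≤ S :=
      le_iSup_of_le ⟨t, ht⟩ le_rfl
    have h2 : wLp 1 w f (ball a t)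
        = ∫⁻ x in ball a t, ENNReal.ofReal |f x| * ENNReal.ofReal (w x) := by
      simp [wLp, ENNReal.rpow_one]
    rw [h2] at h1
    calc (∫⁻ x in ball a t, ENNReal.ofReal |f x| * ENNReal.ofReal (w x))
        = wSet w (ball a t) * ((wSet w (ball a t))⁻¹ *
          ∫⁻ x in ball a t, ENNReal.ofReal |f x| * ENNReal.ofReal (w x)) := by
          rw [← mul_assoc, ENNReal.mul_inv_cancel (hWne a (hr.trans ht)) (hWnt a t), one_mul]
      _ ≤ wSet w (ball a t) * S := mul_le_mul_right h1 _
  unfold wWeakLpE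
  refine iSup_le ?_
  rintro ⟨γ, hγ⟩
  have hγpos : (0 : ℝ) < γ := hγ
  simp only
  set γ' := ENNReal.ofReal γ with hγ'def
  set E := {x | x ∈ ball a r ∧ γ' < HLMax f x} with hEdef
  have hpow : (wSet w E) ^ ((1 : ℝ)/1) = wSet w E := by
    rw [show (1:ℝ)/1 = 1 by norm_num, ENNReal.rpow_one]
  rw [hpow]
  have hEsub : E ⊆ ball a r := fun x hx => hx.1
  rcases le_or_gt γ' (ENNReal.ofReal (C₀ * 2 ^ n) * S) with hcase | hcase
  · calc γ' * wSet w E ≤ (ENNReal.ofReal (C₀ * 2 ^ n) * S) * wSet w (ball a r) :=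
        mul_le_mul' hcase (lintegral_mono_set hEsub)
      _ = ENNReal.ofReal (C₀ * 2 ^ n) * wSet w (ball a r) * S := by ring
      _ ≤ C * wSet w (ball a r) * S := by
          have h1 : C₀ * 2 ^ n ≤ (C₀ + 1) ^ 3 * 16 ^ n := by
            have h2 : (2:ℝ) ^ n ≤ 16 ^ n := pow_le_pow_left₀ (by norm_num) (by norm_num) n
            have h3 : C₀ ≤ (C₀ + 1) ^ 3 := by nlinarith [sq_nonneg C₀, sq_nonneg (C₀ + 1), hC₀.le]
            exact mul_le_mul h3 h2 (by positivity) (by positivity)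
          exact mul_le_mul_left (mul_le_mul_left (ENNReal.ofReal_le_ofReal h1) _) _
  · -- main case
    have hrho : ∀ x ∈ E, ∃ ρ : ℝ, 0 < ρ ∧ ρ ≤ r ∧
        γ' < (volume (ball x ρ))⁻¹ * ∫⁻ y in ball x ρ, ENNReal.ofReal |f y| := by
      intro x hx
      obtain ⟨hxball, hxM⟩ := hx
      simp only [HLMax, lt_iSup_iff] at hxM
      obtain ⟨⟨ρ, hρpos⟩, hρ⟩ := hxM
      have hρpos' : (0:ℝ) < ρ := hρpos
      refine ⟨ρ, hρpos', ?_, hρ⟩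
      by_contra hcon
      push_neg at hcon
      have htr : r < ρ + r := by linarith
      have htpos : 0 < ρ + r := lt_trans hr htr
      have hsub1 : ball x ρ ⊆ ball a (ρ + r) := by
        apply ball_subset_ball'
        have := mem_ball.1 hxball
        linarith
      have hJ1 : (∫⁻ y in ball a (ρ + r), ENNReal.ofReal |f y|) * wSet w (ball a (ρ + r)) ≤
          (D * volume (ball a (ρ + r)) * S) * wSet w (ball a (ρ + r)) := by
        calc (∫⁻ y in ball a (ρ + r), ENNReal.ofReal |f y|) * wSet w (ball a (ρ + r))
            ≤ D * volume (ball a (ρ + r)) *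
              ∫⁻ y in ball a (ρ + r), ENNReal.ofReal |f y| * ENNReal.ofReal (w y) :=
              aux_keyf hw hA1 hfm a htpos
          _ ≤ D * volume (ball a (ρ + r)) * (wSet w (ball a (ρ + r)) * S) :=
              mul_le_mul_right (hI htr) _
          _ = (D * volume (ball a (ρ + r)) * S) * wSet w (ball a (ρ + r)) := by ring
      have hJ : (∫⁻ y in ball a (ρ + r), ENNReal.ofReal |f y|) ≤ D * volume (ball a (ρ + r)) * S :=
        (ENNReal.mul_le_mul_iff_left (hWne a htpos) (hWnt a (ρ + r))).1 hJ1
      have hvol : volume (ball a (ρ + r)) ≤ ENNReal.ofReal (2 ^ n) * volume (ball x ρ) := by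
        calc volume (ball a (ρ + r)) ≤ volume (ball a (2 * ρ)) :=
            measure_mono (ball_subset_ball (by linarith))
          _ = volume (ball x (2 * ρ)) := by
              rw [Measure.addHaar_ball_center volume a, Measure.addHaar_ball_center volume x]
          _ = ENNReal.ofReal (2 ^ n) * volume (ball x ρ) := hscale x 2 hρpos' (by norm_num)
      have havg : (volume (ball x ρ))⁻¹ * (∫⁻ y in ball x ρ, ENNReal.ofReal |f y|) ≤
          ENNReal.ofReal (C₀ * 2 ^ n) * S := by
        calc (volume (ball x ρ))⁻¹ * (∫⁻ y in ball x ρ, ENNReal.ofReal |f y|)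
            ≤ (volume (ball x ρ))⁻¹ * (D * (ENNReal.ofReal (2 ^ n) * volume (ball x ρ)) * S) := by
              refine mul_le_mul_right ((lintegral_mono_set hsub1).trans (hJ.trans ?_)) _
              exact mul_le_mul_left (mul_le_mul_right hvol _) _
          _ = (D * ENNReal.ofReal (2 ^ n) * S) * ((volume (ball x ρ))⁻¹ * volume (ball x ρ)) := by
              ring
          _ = ENNReal.ofReal (C₀ * 2 ^ n) * S := by
              rw [ENNReal.inv_mul_cancel (hV0 x hρpos') (hVt x ρ), mul_one,
                ENNReal.ofReal_mul hC₀.le]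
      exact lt_irrefl _ (hcase.trans (hρ.trans_le havg))
    choose! ρ hρ0 hρr hργ using hrho
    obtain ⟨u, huE, hdisj, hcover⟩ :=
      Vitali.exists_disjoint_subfamily_covering_enlargement_closedBall E id ρ r hρr 4
        (by norm_num)
    have hdisj' : u.PairwiseDisjoint fun b => ball (id b) (ρ b) :=
      hdisj.mono fun b => ball_subset_closedBall
    have hcnt : u.Countable :=
      hdisj'.countable_of_isOpen (fun b _ => isOpen_ball)
        (fun b hb => ⟨b, mem_ball_self (hρ0 b (huE hb))⟩)
    have hEcov : E ⊆ ⋃ b ∈ u, ball b (8 * ρ b) := by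
      intro x hx
      obtain ⟨b, hbu, hxb⟩ := hcover x hx
      have hb0 : 0 < ρ b := hρ0 b (huE hbu)
      have hx8 : closedBall (id b) (4 * ρ b) ⊆ ball b (8 * ρ b) :=
        closedBall_subset_ball (by linarith)
      exact mem_biUnion hbu (hx8 (hxb (mem_closedBall_self (hρ0 x hx).le)))
    set μ := volume.withDensity (fun x => ENNReal.ofReal (w x)) with hμdef
    set ν := volume.withDensity (fun x => ENNReal.ofReal |f x| * ENNReal.ofReal (w x)) with hνdef
    have hμapp : ∀ {s : Set (EuclideanSpace ℝ (Fin n))}, MeasurableSet s → μ s = wSet w s :=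
      fun hs => withDensity_apply _ hs
    have hνapp : ∀ {s : Set (EuclideanSpace ℝ (Fin n))}, MeasurableSet s →
        ν s = ∫⁻ x in s, ENNReal.ofReal |f x| * ENNReal.ofReal (w x) :=
      fun hs => withDensity_apply _ hs
    have hball8 : ∀ b ∈ u, wSet w (ball b (8 * ρ b)) ≤
        D * ENNReal.ofReal (8 ^ n) * wSet w (ball b (ρ b)) :=
      fun b hb => hdoublek b 8 (hρ0 b (huE hb)) (by norm_num)
    have hballγ : ∀ b ∈ u, γ' * wSet w (ball b (ρ b)) ≤ D * ν (ball b (ρ b)) := by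
      intro b hb
      have h0 := hρ0 b (huE hb)
      have havg := (hργ b (huE hb)).le
      have h1 : γ' * volume (ball b (ρ b)) ≤ ∫⁻ y in ball b (ρ b), ENNReal.ofReal |f y| := by
        calc γ' * volume (ball b (ρ b))
            ≤ ((volume (ball b (ρ b)))⁻¹ * ∫⁻ y in ball b (ρ b), ENNReal.ofReal |f y|) *
              volume (ball b (ρ b)) := mul_le_mul_left havg _
          _ = (∫⁻ y in ball b (ρ b), ENNReal.ofReal |f y|) *
              ((volume (ball b (ρ b)))⁻¹ * volume (ball b (ρ b))) := by ring
          _ = _ := by rw [ENNReal.inv_mul_cancel (hV0 b h0) (hVt b (ρ b)), mul_one]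
      have h2 : (γ' * wSet w (ball b (ρ b))) * volume (ball b (ρ b)) ≤
          (D * ∫⁻ x in ball b (ρ b), ENNReal.ofReal |f x| * ENNReal.ofReal (w x)) *
            volume (ball b (ρ b)) := by
        calc (γ' * wSet w (ball b (ρ b))) * volume (ball b (ρ b))
            = (γ' * volume (ball b (ρ b))) * wSet w (ball b (ρ b)) := by ring
          _ ≤ (∫⁻ y in ball b (ρ b), ENNReal.ofReal |f y|) * wSet w (ball b (ρ b)) :=
              mul_le_mul_left h1 _
          _ ≤ D * volume (ball b (ρ b)) *
              ∫⁻ x in ball b (ρ b), ENNReal.ofReal |f x| * ENNReal.ofReal (w x) :=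
              aux_keyf hw hA1 hfm b h0
          _ = (D * ∫⁻ x in ball b (ρ b), ENNReal.ofReal |f x| * ENNReal.ofReal (w x)) *
              volume (ball b (ρ b)) := by ring
      have h3 := (ENNReal.mul_le_mul_iff_left (hV0 b h0) (hVt b (ρ b))).1 h2
      rw [hνapp measurableSet_ball]
      exact h3
    have hUsub : (⋃ b ∈ u, ball b (ρ b)) ⊆ ball a (2 * r) := by
      refine iUnion₂_subset fun b hb => ?_
      have hbE := huE hb
      apply ball_subset_ball'
      have h1 : dist b a < r := mem_ball.1 hbE.1
      have h2 := hρr b hbE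
      linarith
    have hWE : wSet w E ≤ ∑' b : u, wSet w (ball (b : EuclideanSpace ℝ (Fin n)) (8 * ρ b)) := by
      calc wSet w E ≤ wSet w (⋃ b ∈ u, ball b (8 * ρ b)) := lintegral_mono_set hEcov
        _ = μ (⋃ b ∈ u, ball b (8 * ρ b)) :=
            (hμapp (MeasurableSet.biUnion hcnt fun b _ => measurableSet_ball)).symm
        _ ≤ ∑' b : u, μ (ball (b : EuclideanSpace ℝ (Fin n)) (8 * ρ b)) :=
            measure_biUnion_le μ hcnt _
        _ = ∑' b : u, wSet w (ball (b : EuclideanSpace ℝ (Fin n)) (8 * ρ b)) :=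
            tsum_congr fun b => hμapp measurableSet_ball
    have hsum : ∑' b : u, ν (ball (b : EuclideanSpace ℝ (Fin n)) (ρ b)) =
        ν (⋃ b ∈ u, ball b (ρ b)) :=
      (measure_biUnion hcnt hdisj' fun b _ => measurableSet_ball).symm
    have hdouble : wSet w (ball a (2 * r)) ≤ D * ENNReal.ofReal (2 ^ n) * wSet w (ball a r) :=
      hdoublek a 2 hr (by norm_num)
    calc γ' * wSet w E
        ≤ γ' * ∑' b : u, wSet w (ball (b : EuclideanSpace ℝ (Fin n)) (8 * ρ b)) :=
          mul_le_mul_right hWE _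
      _ ≤ γ' * ∑' b : u, (D * ENNReal.ofReal (8 ^ n) *
          wSet w (ball (b : EuclideanSpace ℝ (Fin n)) (ρ b))) :=
          by gcongr with b; exact hball8 b.1 b.2
      _ = D * ENNReal.ofReal (8 ^ n) *
          ∑' b : u, (γ' * wSet w (ball (b : EuclideanSpace ℝ (Fin n)) (ρ b))) := by
          rw [ENNReal.tsum_mul_left, ENNReal.tsum_mul_left]; ring
      _ ≤ D * ENNReal.ofReal (8 ^ n) *
          ∑' b : u, (D * ν (ball (b : EuclideanSpace ℝ (Fin n)) (ρ b))) :=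
          by
            refine mul_le_mul_right (ENNReal.tsum_le_tsum ?_) _
            intro b
            exact hballγ b.1 b.2
      _ = D * ENNReal.ofReal (8 ^ n) * (D * ν (⋃ b ∈ u, ball b (ρ b))) := by
          rw [ENNReal.tsum_mul_left, hsum]
      _ ≤ D * ENNReal.ofReal (8 ^ n) * (D * ν (ball a (2 * r))) :=
          mul_le_mul_right (mul_le_mul_right (measure_mono hUsub) _) _
      _ = D * ENNReal.ofReal (8 ^ n) *
          (D * ∫⁻ x in ball a (2 * r), ENNReal.ofReal |f x| * ENNReal.ofReal (w x)) := by
          rw [hνapp measurableSet_ball]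
      _ ≤ D * ENNReal.ofReal (8 ^ n) * (D * (wSet w (ball a (2 * r)) * S)) := by
          gcongr
          exact hI (by linarith)
      _ ≤ D * ENNReal.ofReal (8 ^ n) * (D * ((D * ENNReal.ofReal (2 ^ n) *
          wSet w (ball a r)) * S)) := by gcongr
      _ = (D * D * D * (ENNReal.ofReal (8 ^ n) * ENNReal.ofReal (2 ^ n))) *
          wSet w (ball a r) * S := by ring
      _ ≤ C * wSet w (ball a r) * S := by
          refine mul_le_mul_left (mul_le_mul_left ?_ _) _
          have he : D * D * D * (ENNReal.ofReal (8 ^ n) * ENNReal.ofReal (2 ^ n)) =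
              ENNReal.ofReal (C₀ * C₀ * C₀ * (8 ^ n * 2 ^ n)) := by
            rw [← ENNReal.ofReal_mul hC₀.le, ← ENNReal.ofReal_mul (by positivity),
              ← ENNReal.ofReal_mul (by positivity : (0:ℝ) ≤ (8:ℝ) ^ n),
              ← ENNReal.ofReal_mul (by positivity)]
          rw [he]
          apply ENNReal.ofReal_le_ofReal
          have h16 : (8:ℝ) ^ n * 2 ^ n = 16 ^ n := by rw [← mul_pow]; norm_num
          rw [h16]
          have h3 : C₀ * C₀ * C₀ ≤ (C₀ + 1) ^ 3 := by nlinarith [sq_nonneg C₀, sq_nonneg (C₀ + 1), hC₀.le]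
          exact mul_le_mul h3 le_rfl (by positivity) (by positivity)
end

section
/- Let w ∈ A_1 and let M be the Hardy–Littlewood maximal operator. Suppose ψ₁ and ψ₂ are positive functions on ℝⁿ × (0,∞) for which there is a constant C > 0, independent of a and r, with sup_{r<t<∞} ψ₁(a,t) ≤ C·ψ₂(a,r) for every (a,r) ∈ ℝⁿ × (0,∞). Then M is bounded from M^{1,w}_{ψ₁} to WM^{1,w}_{ψ₂}: there is C' > 0 such that ‖Mf‖_{WM^{1,w}_{ψ₂}} ≤ C'·‖f‖_{M^{1,w}_{ψ₁}} for every f ∈ M^{1,w}_{ψ₁}. -/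
open MeasureTheory Metric Set
open scoped ENNReal

section Aux

open MeasureTheory Metric Set
open scoped ENNReal

private lemma aux_cancel {a b X Y : ℝ≥0∞} (ha : a ≠ 0) (ha' : a ≠ ⊤) (hb : b ≠ 0) (hb' : b ≠ ⊤)
    (h : X ≤ a * b * Y) : a⁻¹ * b⁻¹ * X ≤ Y := by
  calc a⁻¹ * b⁻¹ * X ≤ a⁻¹ * b⁻¹ * (a * b * Y) := by gcongr
  _ = (a⁻¹ * a) * ((b⁻¹ * b) * Y) := by ring
  _ = Y := by
      rw [ENNReal.inv_mul_cancel ha ha', ENNReal.inv_mul_cancel hb hb', one_mul, one_mul]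

private lemma aux_uncancel {a b X Y : ℝ≥0∞} (ha : a ≠ 0) (ha' : a ≠ ⊤) (hb : b ≠ 0) (hb' : b ≠ ⊤)
    (h : a⁻¹ * b⁻¹ * X ≤ Y) : X ≤ a * b * Y := by
  calc X = (a * a⁻¹) * ((b * b⁻¹) * X) := by
        rw [ENNReal.mul_inv_cancel ha ha', ENNReal.mul_inv_cancel hb hb', one_mul, one_mul]
  _ = a * b * (a⁻¹ * b⁻¹ * X) := by ring
  _ ≤ a * b * Y := by gcongr

private lemma nu_ne_zero {n : ℕ} {w : EuclideanSpace ℝ (Fin n) → ℝ} (hw : IsWeight w)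
    (a : EuclideanSpace ℝ (Fin n)) {r : ℝ} (hr : 0 < r) :
    (∫⁻ x in ball a r, ENNReal.ofReal (w x)) ≠ 0 := by
  have hmeas : Measurable fun x => ENNReal.ofReal (w x) := ENNReal.measurable_ofReal.comp hw.1
  have hpos : 0 < ∫⁻ x in ball a r, ENNReal.ofReal (w x) := by
    rw [lintegral_pos_iff_support hmeas]
    have h1 : ∀ᵐ x ∂(volume.restrict (ball a r)),
        x ∈ Function.support fun x => ENNReal.ofReal (w x) := by
      filter_upwards [ae_restrict_of_ae hw.2.2.2] with x hx
      simp [Function.mem_support, ENNReal.ofReal_eq_zero, not_le, hx]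
    have hcompl : (volume.restrict (ball a r))
        (Function.support fun x => ENNReal.ofReal (w x))ᶜ = 0 := by
      rw [Set.compl_def]
      exact MeasureTheory.ae_iff.mp h1
    rw [pos_iff_ne_zero]
    intro h0
    have huniv : (volume.restrict (ball a r)) Set.univ = 0 := by
      have h2 := measure_union_le (μ := volume.restrict (ball a r))
        (Function.support fun x => ENNReal.ofReal (w x))
        (Function.support fun x => ENNReal.ofReal (w x))ᶜ
      simpa [Set.union_compl_self, h0, hcompl] using h2
    rw [Measure.restrict_apply_univ] at huniv
    exact (measure_ball_pos volume a hr).ne' huniv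
  exact hpos.ne'

private lemma nu_ne_top {n : ℕ} {w : EuclideanSpace ℝ (Fin n) → ℝ} (hw : IsWeight w)
    (a : EuclideanSpace ℝ (Fin n)) (r : ℝ) :
    (∫⁻ x in ball a r, ENNReal.ofReal (w x)) ≠ ⊤ := by
  have h1 : IntegrableOn w (closedBall a r) volume :=
    hw.2.2.1.integrableOn_isCompact (isCompact_closedBall a r)
  have h2 : IntegrableOn w (ball a r) volume := h1.mono_set ball_subset_closedBall
  have h3 := h2.2
  refine ne_of_lt (lt_of_le_of_lt (lintegral_mono fun x => ?_) h3)
  exact Real.ofReal_le_enorm (w x)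

private lemma vol_ball_scale {n : ℕ} (x : EuclideanSpace ℝ (Fin n)) {ρ k : ℝ}
    (hρ : 0 < ρ) (hk : 1 ≤ k) :
    volume (ball x (k * ρ)) = ENNReal.ofReal (k ^ n) * volume (ball x ρ) := by
  have hk0 : (0:ℝ) < k := lt_of_lt_of_le one_pos hk
  cases n with
  | zero =>
    haveI : Subsingleton (EuclideanSpace ℝ (Fin 0)) :=
      ⟨fun a b => by ext i; exact absurd i.2 (by omega)⟩
    have hballs : ball x (k * ρ) = ball x ρ := by
      ext y
      have hyx : y = x := Subsingleton.elim y x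
      simp [mem_ball, hyx, dist_self, hρ, mul_pos hk0 hρ]
    rw [hballs, pow_zero, ENNReal.ofReal_one, one_mul]
  | succ m =>
    haveI : Nontrivial (EuclideanSpace ℝ (Fin (m + 1))) := by
      have e := (EuclideanSpace.equiv (Fin (m + 1)) ℝ).toEquiv
      exact e.nontrivial
    rw [Measure.addHaar_ball volume x (by positivity : (0:ℝ) ≤ k * ρ),
      Measure.addHaar_ball volume x hρ.le, finrank_euclideanSpace_fin, mul_pow,
      ENNReal.ofReal_mul (by positivity), mul_assoc]

private lemma keyA1 {n : ℕ} {w : EuclideanSpace ℝ (Fin n) → ℝ} (hw : IsWeight w) {CA : ℝ}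
    (hA : ∀ (a : EuclideanSpace ℝ (Fin n)) (r : ℝ), 0 < r →
      ((volume (ball a r))⁻¹ * ∫⁻ x in ball a r, ENNReal.ofReal (w x)) *
        essSup (fun x => ENNReal.ofReal (w x)⁻¹) (volume.restrict (ball a r)) ≤
        ENNReal.ofReal CA)
    (a : EuclideanSpace ℝ (Fin n)) {r : ℝ} (hr : 0 < r) (g : EuclideanSpace ℝ (Fin n) → ℝ≥0∞) :
    (∫⁻ x in ball a r, ENNReal.ofReal (w x)) * ∫⁻ x in ball a r, g x ≤
      ENNReal.ofReal CA * volume (ball a r) * ∫⁻ x in ball a r, g x * ENNReal.ofReal (w x) := by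
  have hvol0 : volume (ball a r) ≠ 0 := (measure_ball_pos volume a hr).ne'
  have hvolt : volume (ball a r) ≠ ⊤ := measure_ball_lt_top.ne
  have hν0 : (∫⁻ x in ball a r, ENNReal.ofReal (w x)) ≠ 0 := nu_ne_zero hw a hr
  set νB := ∫⁻ x in ball a r, ENNReal.ofReal (w x) with hνB
  set S := essSup (fun x => ENNReal.ofReal (w x)⁻¹) (volume.restrict (ball a r)) with hS
  have hStop : S ≠ ⊤ := by
    intro hStop
    have h := hA a r hr
    rw [← hS, hStop, ENNReal.mul_top
      (mul_ne_zero (ENNReal.inv_ne_zero.mpr hvolt) hν0)] at h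
    exact (h.trans_lt ENNReal.ofReal_lt_top).ne rfl
  have hνS : νB * S ≤ ENNReal.ofReal CA * volume (ball a r) := by
    have h := hA a r hr
    calc νB * S = volume (ball a r) * ((volume (ball a r))⁻¹ * νB * S) := by
          rw [show volume (ball a r) * ((volume (ball a r))⁻¹ * νB * S) =
            (volume (ball a r) * (volume (ball a r))⁻¹) * (νB * S) from by ring,
            ENNReal.mul_inv_cancel hvol0 hvolt, one_mul]
    _ ≤ volume (ball a r) * ENNReal.ofReal CA := by exact mul_le_mul_right h _
    _ = ENNReal.ofReal CA * volume (ball a r) := mul_comm _ _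
  have hae : ∀ᵐ x ∂(volume.restrict (ball a r)), g x ≤ g x * ENNReal.ofReal (w x) * S := by
    filter_upwards [ae_restrict_of_ae hw.2.2.2,
      ae_le_essSup (f := fun x => ENNReal.ofReal (w x)⁻¹) (μ := volume.restrict (ball a r))]
      with x hx hx2
    calc g x = g x * (ENNReal.ofReal (w x) * ENNReal.ofReal (w x)⁻¹) := by
          rw [← ENNReal.ofReal_mul hx.le, mul_inv_cancel₀ hx.ne', ENNReal.ofReal_one, mul_one]
    _ = g x * ENNReal.ofReal (w x) * ENNReal.ofReal (w x)⁻¹ := by ring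
    _ ≤ g x * ENNReal.ofReal (w x) * S := mul_le_mul_right hx2 _
  have hint : ∫⁻ x in ball a r, g x ≤
      (∫⁻ x in ball a r, g x * ENNReal.ofReal (w x)) * S := by
    calc ∫⁻ x in ball a r, g x
        ≤ ∫⁻ x in ball a r, g x * ENNReal.ofReal (w x) * S := lintegral_mono_ae hae
    _ = (∫⁻ x in ball a r, g x * ENNReal.ofReal (w x)) * S := lintegral_mul_const' S _ hStop
  calc νB * ∫⁻ x in ball a r, g x
      ≤ νB * ((∫⁻ x in ball a r, g x * ENNReal.ofReal (w x)) * S) := mul_le_mul_right hint _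
  _ = (νB * S) * ∫⁻ x in ball a r, g x * ENNReal.ofReal (w x) := by ring
  _ ≤ (ENNReal.ofReal CA * volume (ball a r)) *
      ∫⁻ x in ball a r, g x * ENNReal.ofReal (w x) := mul_le_mul_left hνS _

private lemma doubling {n : ℕ} {w : EuclideanSpace ℝ (Fin n) → ℝ} (hw : IsWeight w) {CA : ℝ}
    (hA : ∀ (a : EuclideanSpace ℝ (Fin n)) (r : ℝ), 0 < r →
      ((volume (ball a r))⁻¹ * ∫⁻ x in ball a r, ENNReal.ofReal (w x)) *
        essSup (fun x => ENNReal.ofReal (w x)⁻¹) (volume.restrict (ball a r)) ≤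
        ENNReal.ofReal CA)
    (x : EuclideanSpace ℝ (Fin n)) {ρ k : ℝ} (hρ : 0 < ρ) (hk : 1 ≤ k) :
    (∫⁻ y in ball x (k * ρ), ENNReal.ofReal (w y)) ≤
      ENNReal.ofReal CA * ENNReal.ofReal (k ^ n) * ∫⁻ y in ball x ρ, ENNReal.ofReal (w y) := by
  have hk0 : (0:ℝ) < k := lt_of_lt_of_le one_pos hk
  have hkρ : 0 < k * ρ := mul_pos hk0 hρ
  have hsub : ball x ρ ⊆ ball x (k * ρ) := ball_subset_ball (by nlinarith)
  have h1 := keyA1 hw hA x hkρ ((ball x ρ).indicator fun _ => (1:ℝ≥0∞))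
  have e1 : (∫⁻ y in ball x (k*ρ), (ball x ρ).indicator (fun _ => (1:ℝ≥0∞)) y)
      = volume (ball x ρ) := by
    rw [lintegral_indicator measurableSet_ball, Measure.restrict_restrict measurableSet_ball,
      setLIntegral_one, Set.inter_eq_self_of_subset_left hsub]
  have e2 : (∫⁻ y in ball x (k*ρ),
        (ball x ρ).indicator (fun _ => (1:ℝ≥0∞)) y * ENNReal.ofReal (w y))
      = ∫⁻ y in ball x ρ, ENNReal.ofReal (w y) := by
    have hpt : ∀ y, (ball x ρ).indicator (fun _ => (1:ℝ≥0∞)) y * ENNReal.ofReal (w y) =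
        (ball x ρ).indicator (fun z => ENNReal.ofReal (w z)) y := by
      intro y; by_cases hy : y ∈ ball x ρ <;> simp [hy]
    simp_rw [hpt]
    rw [lintegral_indicator measurableSet_ball, Measure.restrict_restrict measurableSet_ball,
      Set.inter_eq_self_of_subset_left hsub]
  rw [e1, e2] at h1
  have evol : volume (ball x (k*ρ)) = ENNReal.ofReal (k ^ n) * volume (ball x ρ) :=
    vol_ball_scale x hρ hk
  rw [evol] at h1
  have hvol0 : volume (ball x ρ) ≠ 0 := (measure_ball_pos volume x hρ).ne'
  have hvolt : volume (ball x ρ) ≠ ⊤ := measure_ball_lt_top.ne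
  have h2 : (∫⁻ y in ball x (k*ρ), ENNReal.ofReal (w y)) * volume (ball x ρ) ≤
      (ENNReal.ofReal CA * ENNReal.ofReal (k ^ n) *
        ∫⁻ y in ball x ρ, ENNReal.ofReal (w y)) * volume (ball x ρ) := by
    calc (∫⁻ y in ball x (k*ρ), ENNReal.ofReal (w y)) * volume (ball x ρ) ≤
        ENNReal.ofReal CA * (ENNReal.ofReal (k ^ n) * volume (ball x ρ)) *
          ∫⁻ y in ball x ρ, ENNReal.ofReal (w y) := h1
    _ = (ENNReal.ofReal CA * ENNReal.ofReal (k ^ n) *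
        ∫⁻ y in ball x ρ, ENNReal.ofReal (w y)) * volume (ball x ρ) := by ring
  exact (ENNReal.mul_le_mul_iff_left hvol0 hvolt).mp h2

end Aux

/-- Let `w ∈ A_1`, and let `ψ₁, ψ₂` be positive functions on `ℝⁿ × (0,∞)`
with `sup_{r<t<∞} ψ₁(a,t) ≤ C·ψ₂(a,r)` for all `(a,r)`. Then the Hardy–Littlewood maximal
operator is bounded from `M^{1,w}_{ψ₁}` to `WM^{1,w}_{ψ₂}`. -/
theorem statement7 {n : ℕ}
    (w : EuclideanSpace ℝ (Fin n) → ℝ) (hw : IsWeight w) (hA1 : MuckA1 w)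
    (ψ₁ ψ₂ : EuclideanSpace ℝ (Fin n) → ℝ → ℝ)
    (hψ₁ : ∀ a r, 0 < r → 0 < ψ₁ a r) (hψ₂ : ∀ a r, 0 < r → 0 < ψ₂ a r)
    (C : ℝ) (hC : 0 < C)
    (hcond : ∀ (a : EuclideanSpace ℝ (Fin n)) (r : ℝ), 0 < r →
      ∀ t, r < t → ψ₁ a t ≤ C * ψ₂ a r) :
    ∃ C' : ℝ, 0 < C' ∧ ∀ f : EuclideanSpace ℝ (Fin n) → ℝ,
      MemLocWLp 1 w f → morreyNorm 1 w ψ₁ f < ⊤ →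
      morreyWeakNormE 1 w ψ₂ (HLMax f) ≤ ENNReal.ofReal C' * morreyNorm 1 w ψ₁ f := by
  classical
  obtain ⟨CA, hCA, hA⟩ := hA1
  set C' : ℝ := C * CA^2 * 3^n + C * CA^3 * 5^n * 2^n with hC'def
  have hC'pos : 0 < C' := by positivity
  refine ⟨C', hC'pos, ?_⟩
  intro f hf hfin
  set N := morreyNorm 1 w ψ₁ f with hNdef
  -- extraction from the Morrey norm
  have hM : ∀ (a : EuclideanSpace ℝ (Fin n)) (t : ℝ), 0 < t →
      (∫⁻ x in ball a t, ENNReal.ofReal |f x| * ENNReal.ofReal (w x)) ≤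
        ENNReal.ofReal (ψ₁ a t) * (∫⁻ x in ball a t, ENNReal.ofReal (w x)) * N := by
    intro a t ht
    have hterm : (ENNReal.ofReal (ψ₁ a t))⁻¹ * wSet w (ball a t) ^ (-(1/1) : ℝ) *
        wLp 1 w f (ball a t) ≤ N := by
      rw [hNdef]
      simp only [morreyNorm]
      exact le_iSup_of_le a (le_iSup_of_le ⟨t, ht⟩ le_rfl)
    have h11 : (-(1/1) : ℝ) = -1 := by norm_num
    rw [h11, ENNReal.rpow_neg_one] at hterm
    have hwlp : wLp 1 w f (ball a t) =
        ∫⁻ x in ball a t, ENNReal.ofReal |f x| * ENNReal.ofReal (w x) := by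
      simp [wLp, ENNReal.rpow_one]
    rw [hwlp] at hterm
    exact aux_uncancel (ENNReal.ofReal_pos.mpr (hψ₁ a t ht)).ne' ENNReal.ofReal_ne_top
      (nu_ne_zero hw a ht) (nu_ne_top hw a t) hterm
  -- the key pointwise-in-(a,r,γ) estimate
  have key : ∀ (a : EuclideanSpace ℝ (Fin n)) (r : ℝ), 0 < r → ∀ γ : ℝ, 0 < γ →
      ENNReal.ofReal γ * wSet w {x | x ∈ ball a r ∧ ENNReal.ofReal γ < HLMax f x} ≤
        ENNReal.ofReal C' * ENNReal.ofReal (ψ₂ a r) *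
          (∫⁻ x in ball a r, ENNReal.ofReal (w x)) * N := by
    intro a r hr γ hγ
    set Λ₁ : ℝ≥0∞ := ENNReal.ofReal C * ENNReal.ofReal CA * ENNReal.ofReal CA *
      ENNReal.ofReal ((3:ℝ)^n) with hΛ₁def
    have hΛ₁eq : Λ₁ = ENNReal.ofReal (C * CA * CA * (3:ℝ)^n) := by
      rw [hΛ₁def, ← ENNReal.ofReal_mul hC.le,
        ← ENNReal.ofReal_mul (by positivity : (0:ℝ) ≤ C * CA),
        ← ENNReal.ofReal_mul (by positivity : (0:ℝ) ≤ C * CA * CA)]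
    have hΛ₁le : Λ₁ ≤ ENNReal.ofReal C' := by
      rw [hΛ₁eq]
      apply ENNReal.ofReal_le_ofReal
      rw [hC'def]
      nlinarith [pow_pos hC (1), pow_pos hCA 3, pow_pos (show (0:ℝ) < 5 by norm_num) n,
        pow_pos (show (0:ℝ) < 2 by norm_num) n, pow_pos hCA 2,
        pow_pos (show (0:ℝ) < 3 by norm_num) n,
        mul_pos (mul_pos (mul_pos hC (pow_pos hCA 3)) (pow_pos (show (0:ℝ) < 5 by norm_num) n))
          (pow_pos (show (0:ℝ) < 2 by norm_num) n)]
    by_cases hcase : ENNReal.ofReal γ ≤ Λ₁ * ENNReal.ofReal (ψ₂ a r) * N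
    · -- small γ : trivial estimate on the ball
      have hsub : wSet w {x | x ∈ ball a r ∧ ENNReal.ofReal γ < HLMax f x} ≤
          ∫⁻ x in ball a r, ENNReal.ofReal (w x) :=
        lintegral_mono_set fun x hx => hx.1
      calc ENNReal.ofReal γ * wSet w {x | x ∈ ball a r ∧ ENNReal.ofReal γ < HLMax f x}
          ≤ (Λ₁ * ENNReal.ofReal (ψ₂ a r) * N) * (∫⁻ x in ball a r, ENNReal.ofReal (w x)) :=
            mul_le_mul' hcase hsub
      _ = Λ₁ * ENNReal.ofReal (ψ₂ a r) * (∫⁻ x in ball a r, ENNReal.ofReal (w x)) * N := by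
            ring
      _ ≤ ENNReal.ofReal C' * ENNReal.ofReal (ψ₂ a r) *
            (∫⁻ x in ball a r, ENNReal.ofReal (w x)) * N := by gcongr
    · -- large γ : Vitali covering argument
      push_neg at hcase
      -- estimate on large balls
      have hLarge : ∀ x ∈ ball a r, ∀ ρ : ℝ, r ≤ ρ →
          (∫⁻ y in ball x ρ, ENNReal.ofReal |f y|) ≤
            Λ₁ * ENNReal.ofReal (ψ₂ a r) * N * volume (ball x ρ) := by
        intro x hx ρ hρ
        have hρ0 : 0 < ρ := lt_of_lt_of_le hr hρ
        have h2ρ : (0:ℝ) < 2 * ρ := by linarith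
        have hxa : dist x a < r := mem_ball.mp hx
        have hsub1 : ball x ρ ⊆ ball a (2*ρ) := by
          intro y hy
          rw [mem_ball] at hy ⊢
          have := dist_triangle y x a
          linarith
        have hsub2 : ball a (2*ρ) ⊆ ball x (3*ρ) := by
          intro y hy
          rw [mem_ball] at hy ⊢
          have h1 := dist_triangle y a x
          have h2 : dist a x = dist x a := dist_comm a x
          linarith
        have h1 := keyA1 hw hA x hρ0 (fun y => ENNReal.ofReal |f y|)
        have h2 : (∫⁻ y in ball x ρ, ENNReal.ofReal |f y| * ENNReal.ofReal (w y)) ≤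
            ∫⁻ y in ball a (2*ρ), ENNReal.ofReal |f y| * ENNReal.ofReal (w y) :=
          lintegral_mono_set hsub1
        have h3 := hM a (2*ρ) h2ρ
        have h4 : (∫⁻ y in ball a (2*ρ), ENNReal.ofReal (w y)) ≤
            ENNReal.ofReal CA * ENNReal.ofReal ((3:ℝ)^n) *
              ∫⁻ y in ball x ρ, ENNReal.ofReal (w y) := by
          calc (∫⁻ y in ball a (2*ρ), ENNReal.ofReal (w y))
              ≤ ∫⁻ y in ball x (3*ρ), ENNReal.ofReal (w y) := lintegral_mono_set hsub2
          _ ≤ ENNReal.ofReal CA * ENNReal.ofReal ((3:ℝ)^n) *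
              ∫⁻ y in ball x ρ, ENNReal.ofReal (w y) :=
            doubling hw hA x hρ0 (by norm_num)
        have h5 : ENNReal.ofReal (ψ₁ a (2*ρ)) ≤ ENNReal.ofReal C * ENNReal.ofReal (ψ₂ a r) := by
          rw [← ENNReal.ofReal_mul hC.le]
          exact ENNReal.ofReal_le_ofReal (hcond a r hr (2*ρ) (by linarith))
        have hν0 : (∫⁻ y in ball x ρ, ENNReal.ofReal (w y)) ≠ 0 := nu_ne_zero hw x hρ0
        have hνt : (∫⁻ y in ball x ρ, ENNReal.ofReal (w y)) ≠ ⊤ := nu_ne_top hw x ρ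
        have hchain : (∫⁻ y in ball x ρ, ENNReal.ofReal |f y|) *
            (∫⁻ y in ball x ρ, ENNReal.ofReal (w y)) ≤
            (Λ₁ * ENNReal.ofReal (ψ₂ a r) * N * volume (ball x ρ)) *
            (∫⁻ y in ball x ρ, ENNReal.ofReal (w y)) := by
          calc (∫⁻ y in ball x ρ, ENNReal.ofReal |f y|) *
              (∫⁻ y in ball x ρ, ENNReal.ofReal (w y))
              = (∫⁻ y in ball x ρ, ENNReal.ofReal (w y)) *
                ∫⁻ y in ball x ρ, ENNReal.ofReal |f y| := mul_comm _ _
          _ ≤ ENNReal.ofReal CA * volume (ball x ρ) *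
              ∫⁻ y in ball x ρ, ENNReal.ofReal |f y| * ENNReal.ofReal (w y) := h1
          _ ≤ ENNReal.ofReal CA * volume (ball x ρ) *
              ∫⁻ y in ball a (2*ρ), ENNReal.ofReal |f y| * ENNReal.ofReal (w y) := by gcongr
          _ ≤ ENNReal.ofReal CA * volume (ball x ρ) *
              (ENNReal.ofReal (ψ₁ a (2*ρ)) * (∫⁻ y in ball a (2*ρ), ENNReal.ofReal (w y)) * N) := by
                gcongr
          _ ≤ ENNReal.ofReal CA * volume (ball x ρ) *
              ((ENNReal.ofReal C * ENNReal.ofReal (ψ₂ a r)) *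
                (ENNReal.ofReal CA * ENNReal.ofReal ((3:ℝ)^n) *
                  ∫⁻ y in ball x ρ, ENNReal.ofReal (w y)) * N) := by gcongr
          _ = (Λ₁ * ENNReal.ofReal (ψ₂ a r) * N * volume (ball x ρ)) *
              (∫⁻ y in ball x ρ, ENNReal.ofReal (w y)) := by rw [hΛ₁def]; ring
        exact (ENNReal.mul_le_mul_iff_left hν0 hνt).mp hchain
      -- selection of small radii
      have hsel : ∀ x ∈ {x | x ∈ ball a r ∧ ENNReal.ofReal γ < HLMax f x},
          ∃ ρ : ℝ, 0 < ρ ∧ ρ < r ∧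
            ENNReal.ofReal γ * volume (ball x ρ) ≤ ∫⁻ y in ball x ρ, ENNReal.ofReal |f y| := by
        rintro x ⟨hxb, hxγ⟩
        simp only [HLMax, lt_iSup_iff] at hxγ
        obtain ⟨⟨ρ, hρmem⟩, hρ⟩ := hxγ
        have hρ0 : 0 < ρ := hρmem
        have hvol0 : volume (ball x ρ) ≠ 0 := (measure_ball_pos volume x hρ0).ne'
        have hvolt : volume (ball x ρ) ≠ ⊤ := measure_ball_lt_top.ne
        have hγvol : ENNReal.ofReal γ * volume (ball x ρ) ≤
            ∫⁻ y in ball x ρ, ENNReal.ofReal |f y| := by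
          calc ENNReal.ofReal γ * volume (ball x ρ)
              ≤ ((volume (ball x ρ))⁻¹ * ∫⁻ y in ball x ρ, ENNReal.ofReal |f y|) *
                volume (ball x ρ) := mul_le_mul_left hρ.le _
          _ = ((volume (ball x ρ))⁻¹ * volume (ball x ρ)) *
              ∫⁻ y in ball x ρ, ENNReal.ofReal |f y| := by ring
          _ = ∫⁻ y in ball x ρ, ENNReal.ofReal |f y| := by
              rw [ENNReal.inv_mul_cancel hvol0 hvolt, one_mul]
        refine ⟨ρ, hρ0, ?_, hγvol⟩
        by_contra hge
        push_neg at hge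
        have hbig := hLarge x hxb ρ hge
        have h7 : ENNReal.ofReal γ * volume (ball x ρ) ≤
            (Λ₁ * ENNReal.ofReal (ψ₂ a r) * N) * volume (ball x ρ) := hγvol.trans hbig
        exact absurd ((ENNReal.mul_le_mul_iff_left hvol0 hvolt).mp h7) (not_le.mpr hcase)
      set E := {x | x ∈ ball a r ∧ ENNReal.ofReal γ < HLMax f x} with hE
      set ρfun : EuclideanSpace ℝ (Fin n) → ℝ :=
        fun x => if h : x ∈ E then (hsel x h).choose else 0 with hρfun
      have hρspec : ∀ x ∈ E, 0 < ρfun x ∧ ρfun x < r ∧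
          ENNReal.ofReal γ * volume (ball x (ρfun x)) ≤
            ∫⁻ y in ball x (ρfun x), ENNReal.ofReal |f y| := by
        intro x hx
        have heq : ρfun x = (hsel x hx).choose := dif_pos hx
        rw [heq]
        exact (hsel x hx).choose_spec
      obtain ⟨u, hu_sub, hu_disj, hu_cov⟩ :=
        Vitali.exists_disjoint_subfamily_covering_enlargement_closedBall E id ρfun r
          (fun x hx => ((hρspec x hx).2.1).le) 4 (by norm_num)
      simp only [id_eq] at hu_disj hu_cov
      have hu_count : u.Countable := by
        apply hu_disj.countable_of_nonempty_interior
        intro b hb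
        have hb0 : 0 < ρfun b := (hρspec b (hu_sub hb)).1
        exact ⟨b, ball_subset_interior_closedBall (mem_ball_self hb0)⟩
      have hcov : E ⊆ ⋃ b ∈ u, closedBall b (4 * ρfun b) := by
        intro x hx
        obtain ⟨b, hbu, hsub⟩ := hu_cov x hx
        exact mem_biUnion hbu (hsub (mem_closedBall_self (hρspec x hx).1.le))
      set ν := volume.withDensity fun x => ENNReal.ofReal (w x) with hνdef
      set κw := volume.withDensity
        (fun x => ENNReal.ofReal |f x| * ENNReal.ofReal (w x)) with hκdef
      have hνap : ∀ s : Set (EuclideanSpace ℝ (Fin n)), MeasurableSet s →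
          ν s = ∫⁻ x in s, ENNReal.ofReal (w x) := fun s hs => withDensity_apply _ hs
      have hκap : ∀ s : Set (EuclideanSpace ℝ (Fin n)), MeasurableSet s →
          κw s = ∫⁻ x in s, ENNReal.ofReal |f x| * ENNReal.ofReal (w x) :=
        fun s hs => withDensity_apply _ hs
      have hwSetE : wSet w E ≤ ν (⋃ b ∈ u, closedBall b (4 * ρfun b)) := by
        rw [hνap _ (MeasurableSet.biUnion hu_count fun b _ => measurableSet_closedBall)]
        exact lintegral_mono_set hcov
      have hstep1 : ν (⋃ b ∈ u, closedBall b (4 * ρfun b)) ≤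
          ∑' b : u, ν (closedBall b (4 * ρfun b)) := measure_biUnion_le ν hu_count _
      have hstep2 : ∀ b : u, ν (closedBall (b : EuclideanSpace ℝ (Fin n)) (4 * ρfun b)) ≤
          ENNReal.ofReal CA * ENNReal.ofReal ((5:ℝ)^n) * ν (ball b (ρfun b)) := by
        intro b
        have hb0 : 0 < ρfun b := (hρspec b (hu_sub b.2)).1
        have hsb : closedBall (b : EuclideanSpace ℝ (Fin n)) (4 * ρfun b) ⊆
            ball b (5 * ρfun b) := closedBall_subset_ball (by linarith)
        calc ν (closedBall (b : EuclideanSpace ℝ (Fin n)) (4 * ρfun b))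
            ≤ ν (ball b (5 * ρfun b)) := measure_mono hsb
        _ = ∫⁻ y in ball (b : EuclideanSpace ℝ (Fin n)) (5 * ρfun b), ENNReal.ofReal (w y) :=
            hνap _ measurableSet_ball
        _ ≤ ENNReal.ofReal CA * ENNReal.ofReal ((5:ℝ)^n) *
            ∫⁻ y in ball (b : EuclideanSpace ℝ (Fin n)) (ρfun b), ENNReal.ofReal (w y) :=
            doubling hw hA _ hb0 (by norm_num)
        _ = ENNReal.ofReal CA * ENNReal.ofReal ((5:ℝ)^n) * ν (ball b (ρfun b)) := by
            rw [hνap _ measurableSet_ball]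
      have hstep3 : ∀ b : u, ENNReal.ofReal γ *
          ν (ball (b : EuclideanSpace ℝ (Fin n)) (ρfun b)) ≤
          ENNReal.ofReal CA * κw (ball b (ρfun b)) := by
        intro b
        have hspec := hρspec b (hu_sub b.2)
        have h1 := keyA1 hw hA (b : EuclideanSpace ℝ (Fin n)) hspec.1
          (fun y => ENNReal.ofReal |f y|)
        have hvol0 : volume (ball (b : EuclideanSpace ℝ (Fin n)) (ρfun b)) ≠ 0 :=
          (measure_ball_pos volume _ hspec.1).ne'
        have hvolt : volume (ball (b : EuclideanSpace ℝ (Fin n)) (ρfun b)) ≠ ⊤ :=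
          measure_ball_lt_top.ne
        have h2 : (ENNReal.ofReal γ * ν (ball (b : EuclideanSpace ℝ (Fin n)) (ρfun b))) *
            volume (ball (b : EuclideanSpace ℝ (Fin n)) (ρfun b)) ≤
            (ENNReal.ofReal CA * κw (ball b (ρfun b))) *
            volume (ball (b : EuclideanSpace ℝ (Fin n)) (ρfun b)) := by
          rw [hνap _ measurableSet_ball, hκap _ measurableSet_ball]
          calc (ENNReal.ofReal γ *
              ∫⁻ y in ball (b : EuclideanSpace ℝ (Fin n)) (ρfun b), ENNReal.ofReal (w y)) *
              volume (ball (b : EuclideanSpace ℝ (Fin n)) (ρfun b))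
              = (∫⁻ y in ball (b : EuclideanSpace ℝ (Fin n)) (ρfun b), ENNReal.ofReal (w y)) *
                (ENNReal.ofReal γ * volume (ball (b : EuclideanSpace ℝ (Fin n)) (ρfun b))) := by
                  ring
          _ ≤ (∫⁻ y in ball (b : EuclideanSpace ℝ (Fin n)) (ρfun b), ENNReal.ofReal (w y)) *
              ∫⁻ y in ball (b : EuclideanSpace ℝ (Fin n)) (ρfun b), ENNReal.ofReal |f y| :=
                mul_le_mul_right hspec.2.2 _
          _ ≤ ENNReal.ofReal CA * volume (ball (b : EuclideanSpace ℝ (Fin n)) (ρfun b)) *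
              ∫⁻ y in ball (b : EuclideanSpace ℝ (Fin n)) (ρfun b),
                ENNReal.ofReal |f y| * ENNReal.ofReal (w y) := h1
          _ = (ENNReal.ofReal CA *
              ∫⁻ y in ball (b : EuclideanSpace ℝ (Fin n)) (ρfun b),
                ENNReal.ofReal |f y| * ENNReal.ofReal (w y)) *
              volume (ball (b : EuclideanSpace ℝ (Fin n)) (ρfun b)) := by ring
        exact (ENNReal.mul_le_mul_iff_left hvol0 hvolt).mp h2
      have hdisj' : u.PairwiseDisjoint fun b => ball b (ρfun b) :=
        hu_disj.mono fun b => ball_subset_closedBall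
      have hsum : (∑' b : u, κw (ball (b : EuclideanSpace ℝ (Fin n)) (ρfun b))) ≤
          κw (ball a (2*r)) := by
        rw [← measure_biUnion hu_count hdisj' (fun b _ => measurableSet_ball)]
        apply measure_mono
        intro y hy
        simp only [mem_iUnion, exists_prop] at hy
        obtain ⟨b, hb, hyb⟩ := hy
        have hbE := hu_sub hb
        have h1 : dist y a ≤ dist y b + dist b a := dist_triangle y b a
        have h2 : dist y b < ρfun b := mem_ball.mp hyb
        have h3 : dist b a < r := mem_ball.mp hbE.1
        have h4 : ρfun b < r := (hρspec b hbE).2.1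
        exact mem_ball.mpr (by linarith)
      have hfinal3 : κw (ball a (2*r)) ≤
          (ENNReal.ofReal C * ENNReal.ofReal (ψ₂ a r)) *
            (ENNReal.ofReal CA * ENNReal.ofReal ((2:ℝ)^n) *
              ∫⁻ x in ball a r, ENNReal.ofReal (w x)) * N := by
        rw [hκap _ measurableSet_ball]
        calc (∫⁻ x in ball a (2*r), ENNReal.ofReal |f x| * ENNReal.ofReal (w x))
            ≤ ENNReal.ofReal (ψ₁ a (2*r)) * (∫⁻ x in ball a (2*r), ENNReal.ofReal (w x)) * N :=
              hM a (2*r) (by linarith)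
        _ ≤ (ENNReal.ofReal C * ENNReal.ofReal (ψ₂ a r)) *
            (ENNReal.ofReal CA * ENNReal.ofReal ((2:ℝ)^n) *
              ∫⁻ x in ball a r, ENNReal.ofReal (w x)) * N := by
            gcongr
            · rw [← ENNReal.ofReal_mul hC.le]
              exact ENNReal.ofReal_le_ofReal (hcond a r hr (2*r) (by linarith))
            · exact doubling hw hA a hr (by norm_num)
      have hΛ₂le : ENNReal.ofReal CA * ENNReal.ofReal ((5:ℝ)^n) * ENNReal.ofReal CA *
          (ENNReal.ofReal C * (ENNReal.ofReal CA * ENNReal.ofReal ((2:ℝ)^n))) ≤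
          ENNReal.ofReal C' := by
        have e : ∀ (p q : ℝ), 0 ≤ p →
            ENNReal.ofReal p * ENNReal.ofReal q = ENNReal.ofReal (p * q) :=
          fun p q hp => (ENNReal.ofReal_mul hp).symm
        rw [e CA ((5:ℝ)^n) hCA.le, e (CA * (5:ℝ)^n) CA (by positivity),
          e CA ((2:ℝ)^n) hCA.le, e C (CA * (2:ℝ)^n) hC.le,
          e (CA * (5:ℝ)^n * CA) (C * (CA * (2:ℝ)^n)) (by positivity)]
        apply ENNReal.ofReal_le_ofReal
        rw [hC'def]
        nlinarith [mul_pos (mul_pos (mul_pos hC (pow_pos hCA 2))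
          (pow_pos (show (0:ℝ) < 3 by norm_num) n)) (show (0:ℝ) < 1 by norm_num),
          pow_pos (show (0:ℝ) < 3 by norm_num) n, pow_pos hCA 2,
          mul_pos hC (mul_pos (pow_pos hCA 2) (pow_pos (show (0:ℝ) < 3 by norm_num) n))]
      calc ENNReal.ofReal γ * wSet w E
          ≤ ENNReal.ofReal γ * ∑' b : u, ν (closedBall (b : EuclideanSpace ℝ (Fin n))
            (4 * ρfun b)) := mul_le_mul_right (hwSetE.trans hstep1) _
      _ = ∑' b : u, ENNReal.ofReal γ *
            ν (closedBall (b : EuclideanSpace ℝ (Fin n)) (4 * ρfun b)) :=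
          ENNReal.tsum_mul_left.symm
      _ ≤ ∑' b : u, ENNReal.ofReal γ * (ENNReal.ofReal CA * ENNReal.ofReal ((5:ℝ)^n) *
            ν (ball (b : EuclideanSpace ℝ (Fin n)) (ρfun b))) :=
          ENNReal.tsum_le_tsum fun b => mul_le_mul_right (hstep2 b) _
      _ = ∑' b : u, (ENNReal.ofReal CA * ENNReal.ofReal ((5:ℝ)^n)) *
            (ENNReal.ofReal γ * ν (ball (b : EuclideanSpace ℝ (Fin n)) (ρfun b))) :=
          tsum_congr fun b => by ring
      _ ≤ ∑' b : u, (ENNReal.ofReal CA * ENNReal.ofReal ((5:ℝ)^n)) *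
            (ENNReal.ofReal CA * κw (ball (b : EuclideanSpace ℝ (Fin n)) (ρfun b))) :=
          ENNReal.tsum_le_tsum fun b => mul_le_mul_right (hstep3 b) _
      _ = (ENNReal.ofReal CA * ENNReal.ofReal ((5:ℝ)^n) * ENNReal.ofReal CA) *
            ∑' b : u, κw (ball (b : EuclideanSpace ℝ (Fin n)) (ρfun b)) := by
          rw [← ENNReal.tsum_mul_left]
          exact tsum_congr fun b => by ring
      _ ≤ (ENNReal.ofReal CA * ENNReal.ofReal ((5:ℝ)^n) * ENNReal.ofReal CA) *
            κw (ball a (2*r)) := mul_le_mul_right hsum _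
      _ ≤ (ENNReal.ofReal CA * ENNReal.ofReal ((5:ℝ)^n) * ENNReal.ofReal CA) *
            ((ENNReal.ofReal C * ENNReal.ofReal (ψ₂ a r)) *
              (ENNReal.ofReal CA * ENNReal.ofReal ((2:ℝ)^n) *
                ∫⁻ x in ball a r, ENNReal.ofReal (w x)) * N) := mul_le_mul_right hfinal3 _
      _ = (ENNReal.ofReal CA * ENNReal.ofReal ((5:ℝ)^n) * ENNReal.ofReal CA *
            (ENNReal.ofReal C * (ENNReal.ofReal CA * ENNReal.ofReal ((2:ℝ)^n)))) *
            ENNReal.ofReal (ψ₂ a r) * (∫⁻ x in ball a r, ENNReal.ofReal (w x)) * N := by ring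
      _ ≤ ENNReal.ofReal C' * ENNReal.ofReal (ψ₂ a r) *
            (∫⁻ x in ball a r, ENNReal.ofReal (w x)) * N := by gcongr
  -- assemble the norm inequality
  simp only [morreyWeakNormE]
  refine iSup_le fun a => iSup_le fun r => ?_
  obtain ⟨r, hrpos⟩ := r
  simp only
  have h11 : (-(1/1) : ℝ) = -1 := by norm_num
  rw [h11, ENNReal.rpow_neg_one]
  have hA0 : ENNReal.ofReal (ψ₂ a r) ≠ 0 := (ENNReal.ofReal_pos.mpr (hψ₂ a r hrpos)).ne'
  have hAt : ENNReal.ofReal (ψ₂ a r) ≠ ⊤ := ENNReal.ofReal_ne_top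
  have hB0 : wSet w (ball a r) ≠ 0 := nu_ne_zero hw a hrpos
  have hBt : wSet w (ball a r) ≠ ⊤ := nu_ne_top hw a r
  rw [wWeakLpE, ENNReal.mul_iSup]
  refine iSup_le ?_
  rintro ⟨γ, hγ⟩
  simp only
  have hkey := key a r hrpos γ hγ
  rw [show (1/(1:ℝ)) = 1 from by norm_num, ENNReal.rpow_one]
  apply aux_cancel hA0 hAt hB0 hBt
  calc ENNReal.ofReal γ * wSet w {x | x ∈ ball a r ∧ ENNReal.ofReal γ < HLMax f x}
      ≤ ENNReal.ofReal C' * ENNReal.ofReal (ψ₂ a r) *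
        (∫⁻ x in ball a r, ENNReal.ofReal (w x)) * N := hkey
  _ = ENNReal.ofReal (ψ₂ a r) * wSet w (ball a r) *
      (ENNReal.ofReal C' * morreyNorm 1 w ψ₁ f) := by rw [hNdef]; simp only [wSet]; ring
end
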